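/- arXiv:2410.21334 — 4 statements merged into one kernel-verified Lean document; each statement's English description precedes it below -/
import Mathlib

section
/- Let $n \ge 3$ and let $X$ be a connected graph on $n$ vertices. Then the connectivity of $\mathrm{FS}(X, K_n)$ equals its minimum degree, namely $|E(X)|$. -/
open SimpleGraph

/-- The friends-and-strangers graph `FS X Y` of two graphs on `Fin n`:
vertices are permutations of `Fin n`, and `σ, τ` are adjacent iff
`τ = σ ∘ (i j)` for some edge `(i,j)` of `X` with `(σ i, σ j)` an edge of `Y`. -/
def FS {n : ℕ} (X Y : SimpleGraph (Fin n)) : SimpleGraph (Equiv.Perm (Fin n)) :=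
  SimpleGraph.fromRel (fun σ τ => ∃ i j : Fin n,
    X.Adj i j ∧ Y.Adj (σ i) (σ j) ∧ τ = σ * Equiv.swap i j)

/-- A graph is `k`-connected if removing any set of at most `k - 1` vertices
leaves the induced graph connected. -/
def KConnected {V : Type*} (G : SimpleGraph V) (k : ℕ) : Prop :=
  ∀ S : Set V, S.Finite → S.ncard < k → (G.induce (Sᶜ : Set V)).Connected

/-- The connectivity of a graph: the largest `k` such that it is `k`-connected. -/
noncomputable def connectivity {V : Type*} (G : SimpleGraph V) : ℕ :=
  sSup {k | KConnected G k}

/-- There exist `k` internally vertex-disjoint paths between `u` and `v`: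
paths sharing no vertices other than `u` and `v`. -/
def IntDisjPaths {V : Type*} (G : SimpleGraph V) (k : ℕ) (u v : V) : Prop :=
  ∃ P : Fin k → G.Path u v, ∀ i j : Fin k, i ≠ j →
    ∀ x : V, x ∈ (P i).1.support → x ∈ (P j).1.support → x = u ∨ x = v

/-- The star graph on `Fin n`, centered at the last vertex. -/
def starGraph (n : ℕ) : SimpleGraph (Fin n) :=
  SimpleGraph.fromRel (fun _ j => j.val = n - 1)


open Finset

set_option linter.unusedSectionVars false
set_option maxHeartbeats 1000000

namespace FSAux

variable {V : Type*} [Fintype V] [DecidableEq V] (G : SimpleGraph V)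

noncomputable def nbr (A : Finset V) : Finset V :=
  @Finset.filter _ (fun x => x ∉ A ∧ ∃ a ∈ A, G.Adj a x) (Classical.decPred _) Finset.univ

lemma mem_nbr {A : Finset V} {x : V} : x ∈ nbr G A ↔ x ∉ A ∧ ∃ a ∈ A, G.Adj a x := by
  simp [nbr]

lemma nbr_inter_eq (A : Finset V) : A ∩ nbr G A = ∅ := by
  ext x; simp only [mem_inter, mem_nbr, notMem_empty, iff_false]
  rintro ⟨h1, h2, -⟩; exact h2 h1

def Fam (A : Finset V) : Prop := A.Nonempty ∧ A ∪ nbr G A ≠ Finset.univ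

lemma exists_not_mem_of_ne_univ {s : Finset V} (h : s ≠ univ) : ∃ x, x ∉ s := by
  by_contra hc; push_neg at hc; exact h (eq_univ_iff_forall.mpr hc)

variable {G}

/-- a walk starting in `A` whose support avoids `nbr G A` stays in `A`. -/
lemma walk_exit {A : Finset V} {u v : V} (w : G.Walk u v)
    (hu : u ∈ A) (hw : ∀ x ∈ w.support, x ∉ nbr G A) : v ∈ A := by
  induction w with
  | nil => exact hu
  | @cons a b c h p ih =>
    have hb : b ∈ A := by
      by_contra hb
      exact hw b (by simp [Walk.support_cons]) ((mem_nbr (G:=G)).mpr ⟨hb, a, hu, h⟩)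
    exact ih hb (fun x hx => hw x (by simp [Walk.support_cons, hx]))

/-- from a reachability in the induced graph on `Sᶜ`, produce a walk avoiding `S`. -/
lemma walk_of_induce_reachable {S : Set V} {u v : (Sᶜ : Set V)}
    (h : (G.induce (Sᶜ : Set V)).Reachable u v) :
    ∃ w : G.Walk u.1 v.1, ∀ x ∈ w.support, x ∉ S := by
  obtain ⟨w⟩ := h
  induction w with
  | nil =>
    rename_i z
    refine ⟨Walk.nil, ?_⟩
    intro x hx
    simp [Walk.support_nil] at hx
    subst hx
    exact z.2
  | @cons a b c h p ih =>
    obtain ⟨w', hw'⟩ := ih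
    exact ⟨Walk.cons h w', by
      intro x hx
      rcases (List.mem_cons.mp hx : x = a.1 ∨ x ∈ w'.support) with rfl | hx
      · exact a.2
      · exact hw' x hx⟩

lemma induce_reachable_of_walk {S : Set V} {u v : V} (hu : u ∈ (Sᶜ : Set V))
    (w : G.Walk u v) (hw : ∀ x ∈ w.support, x ∉ S) :
    (G.induce (Sᶜ : Set V)).Reachable ⟨u, hu⟩ ⟨v, by
      exact hw v (Walk.end_mem_support w)⟩ := by
  induction w with
  | nil => rfl
  | @cons a b c h p ih =>
    have hb : b ∈ (Sᶜ : Set V) := hw b (by simp [Walk.support_cons])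
    have h1 : (G.induce (Sᶜ : Set V)).Adj ⟨a, hu⟩ ⟨b, hb⟩ := h
    exact (h1.reachable).trans (ih hb (fun x hx => hw x (by simp [Walk.support_cons, hx])))

variable (G)

noncomputable def kappa : ℕ := sInf {k | ∃ A, Fam G A ∧ (nbr G A).card = k}

def Frag (A : Finset V) : Prop := Fam G A ∧ (nbr G A).card = kappa G

noncomputable def asize : ℕ := sInf {k | ∃ A, Frag G A ∧ A.card = k}

def Atom (A : Finset V) : Prop := Frag G A ∧ A.card = asize G

variable {G}

lemma kappa_le {A : Finset V} (h : Fam G A) : kappa G ≤ (nbr G A).card :=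
  Nat.sInf_le ⟨A, h, rfl⟩

lemma frag_exists (h : ∃ A, Fam G A) : ∃ A, Frag G A := by
  have : {k | ∃ A, Fam G A ∧ (nbr G A).card = k}.Nonempty := by
    obtain ⟨A, hA⟩ := h; exact ⟨_, A, hA, rfl⟩
  obtain ⟨A, hA, hk⟩ := Nat.sInf_mem this
  exact ⟨A, hA, hk⟩

lemma atom_exists (h : ∃ A, Fam G A) : ∃ A, Atom G A := by
  have : {k | ∃ A, Frag G A ∧ A.card = k}.Nonempty := by
    obtain ⟨A, hA⟩ := frag_exists h; exact ⟨_, A, hA, rfl⟩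
  obtain ⟨A, hA, hk⟩ := Nat.sInf_mem this
  exact ⟨A, hA, hk⟩

lemma atom_card_le {A F : Finset V} (hA : Atom G A) (hF : Frag G F) : A.card ≤ F.card := by
  rw [hA.2]; exact Nat.sInf_le ⟨F, hF, rfl⟩



/-- complement piece -/
noncomputable def rest (G : SimpleGraph V) (A : Finset V) : Finset V := univ \ (A ∪ nbr G A)

lemma mem_tri (A : Finset V) (x : V) : x ∈ A ∨ x ∈ nbr G A ∨ x ∈ rest G A := by
  by_cases h1 : x ∈ A
  · exact Or.inl h1
  by_cases h2 : x ∈ nbr G A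
  · exact Or.inr (Or.inl h2)
  · exact Or.inr (Or.inr (by simp [rest, h1, h2]))

lemma mem_rest {A : Finset V} {x : V} : x ∈ rest G A ↔ x ∉ A ∧ x ∉ nbr G A := by
  simp [rest, not_or]

lemma rest_disj {A : Finset V} {x : V} (h : x ∈ rest G A) : x ∉ A ∧ x ∉ nbr G A := by
  simp [rest] at h; exact h

lemma nbr_not_mem {A : Finset V} {x : V} (h : x ∈ nbr G A) : x ∉ A := ((mem_nbr G).mp h).1

lemma tripart (C B : Finset V) :
    C.card = (C ∩ B).card + (C ∩ nbr G B).card + (C ∩ rest G B).card := by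
  have hd1 : Disjoint (C ∩ B) (C ∩ nbr G B) := by
    rw [Finset.disjoint_left]
    rintro x hx hx'
    exact nbr_not_mem (mem_inter.mp hx').2 (mem_inter.mp hx).2
  have hd2 : Disjoint ((C ∩ B) ∪ (C ∩ nbr G B)) (C ∩ rest G B) := by
    rw [Finset.disjoint_left]
    rintro x hx hx'
    obtain ⟨-, hr⟩ := mem_inter.mp hx'
    rcases mem_union.mp hx with h | h
    · exact (rest_disj hr).1 (mem_inter.mp h).2
    · exact (rest_disj hr).2 (mem_inter.mp h).2
  have he : (C ∩ B) ∪ (C ∩ nbr G B) ∪ (C ∩ rest G B) = C := by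
    ext x
    simp only [mem_union, mem_inter]
    constructor
    · rintro ((⟨h, -⟩ | ⟨h, -⟩) | ⟨h, -⟩) <;> exact h
    · intro h
      rcases mem_tri B x with h' | h' | h'
      · exact Or.inl (Or.inl ⟨h, h'⟩)
      · exact Or.inl (Or.inr ⟨h, h'⟩)
      · exact Or.inr ⟨h, h'⟩
  calc C.card = ((C ∩ B) ∪ (C ∩ nbr G B) ∪ (C ∩ rest G B)).card := by rw [he]
    _ = ((C ∩ B) ∪ (C ∩ nbr G B)).card + (C ∩ rest G B).card := card_union_of_disjoint hd2
    _ = _ := by rw [card_union_of_disjoint hd1]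

lemma nbr_inter_sub (A C : Finset V) : nbr G (A ∩ C) ⊆ A ∪ nbr G A := by
  intro x hx
  obtain ⟨hx1, y, hy, hadj⟩ := (mem_nbr G).mp hx
  by_cases h : x ∈ A
  · exact mem_union_left _ h
  · exact mem_union_right _ ((mem_nbr G).mpr ⟨h, y, (mem_inter.mp hy).1, hadj⟩)

lemma nbr_union_sub (A C : Finset V) : nbr G (A ∪ C) ⊆ nbr G A ∪ nbr G C := by
  intro x hx
  obtain ⟨hx1, y, hy, hadj⟩ := (mem_nbr G).mp hx
  have hxA : x ∉ A := fun h => hx1 (mem_union_left _ h)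
  have hxC : x ∉ C := fun h => hx1 (mem_union_right _ h)
  rcases mem_union.mp hy with h | h
  · exact mem_union_left _ ((mem_nbr G).mpr ⟨hxA, y, h, hadj⟩)
  · exact mem_union_right _ ((mem_nbr G).mpr ⟨hxC, y, h, hadj⟩)

lemma sub1 (A C : Finset V) :
    nbr G (A ∩ C) ⊆ (nbr G A ∩ C) ∪ ((A ∩ nbr G C) ∪ (nbr G A ∩ nbr G C)) := by
  intro x hx
  obtain ⟨hx1, y, hy, hadj⟩ := (mem_nbr G).mp hx
  obtain ⟨hyA, hyC⟩ := mem_inter.mp hy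
  have h1 : x ∈ A ∨ x ∈ nbr G A := by
    by_cases h : x ∈ A
    · exact Or.inl h
    · exact Or.inr ((mem_nbr G).mpr ⟨h, y, hyA, hadj⟩)
  have h2 : x ∈ C ∨ x ∈ nbr G C := by
    by_cases h : x ∈ C
    · exact Or.inl h
    · exact Or.inr ((mem_nbr G).mpr ⟨h, y, hyC, hadj⟩)
  rcases h1 with h1 | h1 <;> rcases h2 with h2 | h2
  · exact absurd (mem_inter.mpr ⟨h1, h2⟩) hx1
  · exact mem_union_right _ (mem_union_left _ (mem_inter.mpr ⟨h1, h2⟩))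
  · exact mem_union_left _ (mem_inter.mpr ⟨h1, h2⟩)
  · exact mem_union_right _ (mem_union_right _ (mem_inter.mpr ⟨h1, h2⟩))

lemma sub2 (A C : Finset V) :
    nbr G (A ∪ C) ⊆ (nbr G A ∩ rest G C) ∪ ((rest G A ∩ nbr G C) ∪ (nbr G A ∩ nbr G C)) := by
  intro x hx
  obtain ⟨hx1, y, hy, hadj⟩ := (mem_nbr G).mp hx
  have hxA : x ∉ A := fun h => hx1 (mem_union_left _ h)
  have hxC : x ∉ C := fun h => hx1 (mem_union_right _ h)
  have h1 : x ∈ nbr G A ∨ x ∈ nbr G C := by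
    rcases mem_union.mp hy with h | h
    · exact Or.inl ((mem_nbr G).mpr ⟨hxA, y, h, hadj⟩)
    · exact Or.inr ((mem_nbr G).mpr ⟨hxC, y, h, hadj⟩)
  by_cases hNA : x ∈ nbr G A <;> by_cases hNC : x ∈ nbr G C
  · exact mem_union_right _ (mem_union_right _ (mem_inter.mpr ⟨hNA, hNC⟩))
  · refine mem_union_left _ (mem_inter.mpr ⟨hNA, ?_⟩)
    rcases mem_tri C x with h | h | h
    · exact absurd h hxC
    · exact absurd h hNC
    · exact h
  · refine mem_union_right _ (mem_union_left _ (mem_inter.mpr ⟨?_, hNC⟩))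
    rcases mem_tri A x with h | h | h
    · exact absurd h hxA
    · exact absurd h hNA
    · exact h
  · rcases h1 with h | h
    · exact absurd h hNA
    · exact absurd h hNC

lemma submod (A C : Finset V) :
    (nbr G (A ∩ C)).card + (nbr G (A ∪ C)).card ≤ (nbr G A).card + (nbr G C).card := by
  have c1 : (nbr G (A ∩ C)).card ≤
      (nbr G A ∩ C).card + ((A ∩ nbr G C).card + (nbr G A ∩ nbr G C).card) :=
    le_trans (card_le_card (sub1 A C))
      (le_trans (card_union_le _ _) (by gcongr; exact card_union_le _ _))
  have c2 : (nbr G (A ∪ C)).card ≤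
      (nbr G A ∩ rest G C).card + ((rest G A ∩ nbr G C).card + (nbr G A ∩ nbr G C).card) :=
    le_trans (card_le_card (sub2 A C))
      (le_trans (card_union_le _ _) (by gcongr; exact card_union_le _ _))
  have t1 := tripart (G := G) (nbr G A) C
  have t2 := tripart (G := G) (nbr G C) A
  have i1 : (A ∩ nbr G C).card = (nbr G C ∩ A).card := by rw [inter_comm]
  have i2 : (nbr G A ∩ nbr G C).card = (nbr G C ∩ nbr G A).card := by rw [inter_comm]
  have i3 : (rest G A ∩ nbr G C).card = (nbr G C ∩ rest G A).card := by rw [inter_comm]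
  omega


lemma fam_inter {A C : Finset V} (hA : Fam G A) (hne : (A ∩ C).Nonempty) : Fam G (A ∩ C) := by
  refine ⟨hne, ?_⟩
  obtain ⟨z, hz⟩ := exists_not_mem_of_ne_univ hA.2
  intro hU
  have hzm : z ∈ (A ∩ C) ∪ nbr G (A ∩ C) := hU ▸ mem_univ z
  rcases mem_union.mp hzm with h | h
  · exact hz (mem_union_left _ ((mem_inter.mp h).1))
  · exact hz (nbr_inter_sub A C h)

lemma frag_strict {A C : Finset V} (hA : Atom G A) (hC : Fam G C)
    (hne : (A ∩ C).Nonempty) (hns : ¬ A ⊆ C) :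
    kappa G + 1 ≤ (nbr G (A ∩ C)).card := by
  have hfam := fam_inter hA.1.1 hne
  have h1 := kappa_le hfam
  by_contra hcon
  push_neg at hcon
  have heq : (nbr G (A ∩ C)).card = kappa G := by omega
  have hfr : Frag G (A ∩ C) := ⟨hfam, heq⟩
  have hle := atom_card_le hA hfr
  have hlt : (A ∩ C).card < A.card := by
    refine card_lt_card ?_
    refine Finset.ssubset_iff_subset_ne.mpr ⟨inter_subset_left, fun he => hns ?_⟩
    exact Finset.inter_eq_left.mp he
  omega

lemma nbr_rest_subset {F : Finset V} : nbr G (rest G F) ⊆ nbr G F := by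
  intro x hx
  obtain ⟨hx1, y, hy, hadj⟩ := (mem_nbr G).mp hx
  obtain ⟨hyF, hyN⟩ := rest_disj hy
  rcases mem_tri F x with h | h | h
  · exact absurd ((mem_nbr G).mpr ⟨hyF, x, h, hadj.symm⟩) hyN
  · exact h
  · exact absurd h hx1

lemma rest_nonempty {F : Finset V} (hF : Fam G F) : (rest G F).Nonempty := by
  obtain ⟨z, hz⟩ := exists_not_mem_of_ne_univ hF.2
  refine ⟨z, ?_⟩
  simp only [rest, mem_sdiff, mem_univ, true_and]
  exact hz

lemma compl_frag {F : Finset V} (hF : Frag G F) :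
    Frag G (rest G F) ∧ nbr G (rest G F) = nbr G F := by
  have hne := rest_nonempty hF.1
  have hsub : nbr G (rest G F) ⊆ nbr G F := nbr_rest_subset
  have hfam : Fam G (rest G F) := by
    refine ⟨hne, ?_⟩
    obtain ⟨w, hw⟩ := hF.1.1
    intro hU
    have hwm : w ∈ rest G F ∪ nbr G (rest G F) := hU ▸ mem_univ w
    rcases mem_union.mp hwm with h | h
    · exact (rest_disj h).1 hw
    · exact nbr_not_mem (hsub h) hw
  have h1 := kappa_le hfam
  have h2 : (nbr G F).card = kappa G := hF.2
  have heq : nbr G (rest G F) = nbr G F := eq_of_subset_of_card_le hsub (by omega)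
  exact ⟨⟨hfam, by rw [heq, hF.2]⟩, heq⟩

lemma core {A C : Finset V} (hA : Atom G A) (hC : Frag G C)
    (hne : (A ∩ C).Nonempty) (hns : ¬ A ⊆ C)
    (hcc : (rest G A ∩ rest G C).Nonempty) : False := by
  have h1 := frag_strict hA hC.1 hne hns
  have hfamU : Fam G (A ∪ C) := by
    obtain ⟨w, hw⟩ := hA.1.1.1
    refine ⟨⟨w, mem_union_left _ hw⟩, ?_⟩
    obtain ⟨z, hz⟩ := hcc
    obtain ⟨hzA, hzC⟩ := mem_inter.mp hz
    obtain ⟨hzA1, hzA2⟩ := rest_disj hzA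
    obtain ⟨hzC1, hzC2⟩ := rest_disj hzC
    intro hU
    have hzm : z ∈ (A ∪ C) ∪ nbr G (A ∪ C) := hU ▸ mem_univ z
    rcases mem_union.mp hzm with h | h
    · rcases mem_union.mp h with h | h
      · exact hzA1 h
      · exact hzC1 h
    · rcases mem_union.mp (nbr_union_sub A C h) with h | h
      · exact hzA2 h
      · exact hzC2 h
  have h2 := kappa_le hfamU
  have h3 := submod (G := G) A C
  rw [hA.1.2, hC.2] at h3
  omega

lemma atom_subset {A B : Finset V} (hA : Atom G A) (hB : Atom G B)
    (hne : (A ∩ B).Nonempty) : A ⊆ B := by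
  by_contra hns
  have hB' := compl_frag hB.1
  by_cases h1 : (rest G A ∩ rest G B).Nonempty
  · exact core hA hB.1 hne hns h1
  rw [not_nonempty_iff_eq_empty] at h1
  by_cases h3 : (A ∩ rest G B).Nonempty
  · by_cases h4 : (rest G A ∩ B).Nonempty
    · refine core hA hB'.1 h3 ?_ ?_
      · intro hsub
        obtain ⟨w, hw⟩ := hne
        obtain ⟨hwA, hwB⟩ := mem_inter.mp hw
        exact (rest_disj (hsub hwA)).1 hwB
      · obtain ⟨z, hz⟩ := h4
        obtain ⟨hzA, hzB⟩ := mem_inter.mp hz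
        refine ⟨z, mem_inter.mpr ⟨hzA, ?_⟩⟩
        have hnb : z ∉ nbr G (rest G B) := by
          rw [hB'.2]; exact fun hh => nbr_not_mem hh hzB
        have hnr : z ∉ rest G B := fun hh => (rest_disj hh).1 hzB
        exact (mem_rest (G := G)).mpr ⟨hnr, hnb⟩
    · rw [not_nonempty_iff_eq_empty] at h4
      have hsubNB : rest G A ⊆ nbr G B := by
        intro x hx
        rcases mem_tri B x with h | h | h
        · exact absurd (h4 ▸ mem_inter.mpr ⟨hx, h⟩) (notMem_empty x)
        · exact h
        · exact absurd (h1 ▸ mem_inter.mpr ⟨hx, h⟩) (notMem_empty x)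
      have e1 : (nbr G (A ∩ B)).card ≤
          (nbr G A ∩ B).card + ((A ∩ nbr G B).card + (nbr G A ∩ nbr G B).card) :=
        le_trans (card_le_card (sub1 A B))
          (le_trans (card_union_le _ _) (by gcongr; exact card_union_le _ _))
      have e2 := tripart (G := G) (nbr G B) A
      have e3 : (nbr G B ∩ rest G A).card = (rest G A).card := by
        rw [inter_comm, Finset.inter_eq_left.mpr hsubNB]
      have hAfrag' := compl_frag hA.1
      have e4 : A.card ≤ (rest G A).card := atom_card_le hA hAfrag'.1
      have e5 : (nbr G A ∩ B).card ≤ B.card := card_le_card inter_subset_right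
      have e6 : B.card = A.card := by rw [hA.2, hB.2]
      have e7 := frag_strict hA hB.1.1 hne hns
      have e8 : (nbr G B).card = kappa G := hB.1.2
      have i1 : (A ∩ nbr G B).card = (nbr G B ∩ A).card := by rw [inter_comm]
      have i2 : (nbr G A ∩ nbr G B).card = (nbr G B ∩ nbr G A).card := by rw [inter_comm]
      omega
  · rw [not_nonempty_iff_eq_empty] at h3
    have hsubNA : rest G B ⊆ nbr G A := by
      intro x hx
      rcases mem_tri A x with h | h | h
      · exact absurd (h3 ▸ mem_inter.mpr ⟨h, hx⟩) (notMem_empty x)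
      · exact h
      · exact absurd (h1 ▸ mem_inter.mpr ⟨h, hx⟩) (notMem_empty x)
    have e1 : (nbr G (A ∩ B)).card ≤
        (nbr G A ∩ B).card + ((A ∩ nbr G B).card + (nbr G A ∩ nbr G B).card) :=
      le_trans (card_le_card (sub1 A B))
        (le_trans (card_union_le _ _) (by gcongr; exact card_union_le _ _))
    have e2 := tripart (G := G) A B
    have e2' : (A ∩ rest G B).card = 0 := by rw [h3]; exact card_empty
    have e3 := tripart (G := G) (nbr G A) B
    have e4 : (nbr G A ∩ rest G B).card = (rest G B).card := by
      rw [inter_comm, Finset.inter_eq_left.mpr hsubNA]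
    have hB'frag := compl_frag hB.1
    have e5 : A.card ≤ (rest G B).card := atom_card_le hA hB'frag.1
    have e6 : kappa G ≤ (nbr G (A ∩ B)).card := kappa_le (fam_inter hA.1.1 hne)
    have e7 : (nbr G A).card = kappa G := hA.1.2
    have e8 : 1 ≤ (A ∩ B).card := hne.card_pos
    omega

lemma atoms_eq {A B : Finset V} (hA : Atom G A) (hB : Atom G B)
    (hne : (A ∩ B).Nonempty) : A = B := by
  have h1 := atom_subset hA hB hne
  have h2 : A ∩ B = B ∩ A := inter_comm _ _
  have h3 := atom_subset hB hA (h2 ▸ hne)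
  exact Finset.Subset.antisymm h1 h3

lemma atom_walks {H : Finset V} (hH : Atom G H) {u v : V} (hu : u ∈ H) (hv : v ∈ H) :
    ∃ w : G.Walk u v, ∀ x ∈ w.support, x ∈ H := by
  classical
  set C := @Finset.filter _ (fun x => ∃ w : G.Walk u x, ∀ y ∈ w.support, y ∈ H)
    (Classical.decPred _) H with hC
  have hmemC : ∀ x, x ∈ C ↔ x ∈ H ∧ ∃ w : G.Walk u x, ∀ y ∈ w.support, y ∈ H := by
    intro x; rw [hC]; simp
  have huC : u ∈ C := (hmemC u).mpr ⟨hu, Walk.nil, by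
    intro y hy
    rw [Walk.support_nil, List.mem_singleton] at hy
    exact hy ▸ hu⟩
  have hCH : C ⊆ H := filter_subset _ _
  have hnbr : nbr G C ⊆ nbr G H := by
    intro x hx
    obtain ⟨hxC, y, hyC, hadj⟩ := (mem_nbr G).mp hx
    obtain ⟨hyH, w, hw⟩ := (hmemC y).mp hyC
    by_cases hxH : x ∈ H
    · exfalso
      refine hxC ((hmemC x).mpr ⟨hxH, w.concat hadj, ?_⟩)
      intro z hz
      rw [Walk.support_concat, List.mem_append,
        List.mem_singleton] at hz
      rcases hz with hz | rfl
      · exact hw z hz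
      · exact hxH
    · exact (mem_nbr G).mpr ⟨hxH, y, hCH hyC, hadj⟩
  have hfam : Fam G C := by
    refine ⟨⟨u, huC⟩, ?_⟩
    obtain ⟨z, hz⟩ := exists_not_mem_of_ne_univ hH.1.1.2
    intro hU
    have hzm : z ∈ C ∪ nbr G C := hU ▸ mem_univ z
    rcases mem_union.mp hzm with h | h
    · exact hz (mem_union_left _ (hCH h))
    · exact hz (mem_union_right _ (hnbr h))
  have h1 := kappa_le hfam
  have h2 : (nbr G C).card ≤ kappa G := hH.1.2 ▸ card_le_card hnbr
  have hfr : Frag G C := ⟨hfam, by omega⟩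
  have hle := atom_card_le hH hfr
  have hCeq : C = H := eq_of_subset_of_card_le hCH (hH.2 ▸ hle)
  obtain ⟨-, w, hw⟩ := (hmemC v).mp (hCeq ▸ hv)
  exact ⟨w, hw⟩

section Specific
open Equiv

variable {n : ℕ} {X : SimpleGraph (Fin n)} [DecidableRel X.Adj]

noncomputable def gens (X : SimpleGraph (Fin n)) [DecidableRel X.Adj] :
    Finset (Equiv.Perm (Fin n)) :=
  X.edgeFinset.image (Sym2.lift ⟨fun i j => Equiv.swap i j, fun i j => Equiv.swap_comm i j⟩)

lemma mem_gens {t : Equiv.Perm (Fin n)} :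
    t ∈ gens X ↔ ∃ i j, X.Adj i j ∧ t = Equiv.swap i j := by
  simp only [gens, mem_image]
  constructor
  · rintro ⟨e, he, rfl⟩
    induction e using Sym2.ind with
    | _ i j =>
      rw [mem_edgeFinset, mem_edgeSet] at he
      exact ⟨i, j, he, Sym2.lift_mk _ i j⟩
  · rintro ⟨i, j, hadj, rfl⟩
    exact ⟨s(i, j), by rw [mem_edgeFinset, mem_edgeSet]; exact hadj, Sym2.lift_mk _ i j⟩

lemma swap_inj_aux {a b c d : Fin n} (hab : a ≠ b) (hcd : c ≠ d)
    (h : Equiv.swap a b = Equiv.swap c d) : s(a, b) = s(c, d) := by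
  have h1 : Equiv.swap a b c = d := by rw [h]; exact Equiv.swap_apply_left c d
  rcases eq_or_ne c a with rfl | hca
  · rw [Equiv.swap_apply_left] at h1
    rw [h1]
  rcases eq_or_ne c b with rfl | hcb
  · rw [Equiv.swap_apply_right] at h1
    rw [h1, Sym2.eq_swap]
  · rw [Equiv.swap_apply_of_ne_of_ne hca hcb] at h1
    exact absurd h1 hcd

lemma card_gens : (gens X).card = X.edgeFinset.card := by
  rw [gens]
  apply card_image_of_injOn
  rintro e he f hf hef
  revert hef
  induction e using Sym2.ind with
  | _ a b =>
    induction f using Sym2.ind with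
    | _ c d =>
      intro hef
      simp only [mem_coe, mem_edgeFinset, mem_edgeSet] at he hf
      rw [Sym2.lift_mk, Sym2.lift_mk] at hef
      exact swap_inj_aux he.ne hf.ne hef

lemma FS_adj {σ τ : Equiv.Perm (Fin n)} :
    (FS X ⊤).Adj σ τ ↔ ∃ t ∈ gens X, τ = σ * t := by
  rw [show (FS X ⊤) = SimpleGraph.fromRel (fun σ τ => ∃ i j : Fin n, X.Adj i j ∧ (⊤ : SimpleGraph (Fin n)).Adj (σ i) (σ j) ∧ τ = σ * Equiv.swap i j) from rfl, fromRel_adj]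
  constructor
  · rintro ⟨hne, h | h⟩
    · obtain ⟨i, j, hij, -, rfl⟩ := h
      exact ⟨Equiv.swap i j, mem_gens.mpr ⟨i, j, hij, rfl⟩, rfl⟩
    · obtain ⟨i, j, hij, -, rfl⟩ := h
      refine ⟨Equiv.swap i j, mem_gens.mpr ⟨i, j, hij, rfl⟩, ?_⟩
      rw [mul_assoc, Equiv.swap_mul_self, mul_one]
  · rintro ⟨t, ht, rfl⟩
    obtain ⟨i, j, hij, rfl⟩ := mem_gens.mp ht
    refine ⟨?_, Or.inl ⟨i, j, hij, ?_, rfl⟩⟩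
    · intro h
      have h2 : σ i = σ (Equiv.swap i j i) := by
        conv_lhs => rw [h]
        exact Equiv.Perm.mul_apply σ (Equiv.swap i j) i
      rw [Equiv.swap_apply_left] at h2
      exact hij.ne (σ.injective h2)
    · exact (SimpleGraph.top_adj (σ i) (σ j)).mpr fun h => hij.ne (σ.injective h)

lemma gens_inv {t : Equiv.Perm (Fin n)} (ht : t ∈ gens X) : t⁻¹ = t := by
  obtain ⟨i, j, hij, rfl⟩ := mem_gens.mp ht
  exact Equiv.swap_inv i j

lemma gens_ne_one {t : Equiv.Perm (Fin n)} (ht : t ∈ gens X) : t ≠ 1 := by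
  obtain ⟨i, j, hij, rfl⟩ := mem_gens.mp ht
  exact fun h => hij.ne (Equiv.swap_eq_one_iff.mp h)

lemma adj_smul (g σ τ : Equiv.Perm (Fin n)) :
    (FS X ⊤).Adj (g * σ) (g * τ) ↔ (FS X ⊤).Adj σ τ := by
  simp only [FS_adj]
  constructor
  · rintro ⟨t, ht, heq⟩
    rw [mul_assoc] at heq
    exact ⟨t, ht, mul_left_cancel heq⟩
  · rintro ⟨t, ht, rfl⟩
    exact ⟨t, ht, by rw [mul_assoc]⟩

lemma image_nbr (g : Equiv.Perm (Fin n)) (A : Finset (Equiv.Perm (Fin n))) :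
    nbr (FS X ⊤) (A.image (fun z => g * z)) = (nbr (FS X ⊤) A).image (fun z => g * z) := by
  ext x
  constructor
  · intro hx
    obtain ⟨hx1, y, hy, hadj⟩ := (mem_nbr _).mp hx
    obtain ⟨a, ha, rfl⟩ := mem_image.mp hy
    refine mem_image.mpr ⟨g⁻¹ * x, ?_, by rw [mul_inv_cancel_left]⟩
    refine (mem_nbr _).mpr ⟨?_, a, ha, ?_⟩
    · intro hmem
      exact hx1 (mem_image.mpr ⟨g⁻¹ * x, hmem, by rw [mul_inv_cancel_left]⟩)
    · have h2 : (FS X ⊤).Adj (g * a) (g * (g⁻¹ * x)) := by rwa [mul_inv_cancel_left]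
      exact (adj_smul g a (g⁻¹ * x)).mp h2
  · intro hx
    obtain ⟨y, hy, rfl⟩ := mem_image.mp hx
    obtain ⟨hy1, a, ha, hadj⟩ := (mem_nbr _).mp hy
    refine (mem_nbr _).mpr ⟨?_, g * a, mem_image.mpr ⟨a, ha, rfl⟩, (adj_smul g a y).mpr hadj⟩
    intro hmem
    obtain ⟨b, hb, heq⟩ := mem_image.mp hmem
    have hby : b = y := mul_left_cancel heq
    exact hy1 (hby ▸ hb)

lemma image_card (g : Equiv.Perm (Fin n)) (A : Finset (Equiv.Perm (Fin n))) :
    (A.image (fun z => g * z)).card = A.card :=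
  card_image_of_injective _ (mul_right_injective g)

lemma atom_image {A : Finset (Equiv.Perm (Fin n))} (g : Equiv.Perm (Fin n))
    (hA : Atom (FS X ⊤) A) : Atom (FS X ⊤) (A.image (fun z => g * z)) := by
  have hfam : Fam (FS X ⊤) (A.image (fun z => g * z)) := by
    refine ⟨hA.1.1.1.image _, ?_⟩
    intro hU
    rw [image_nbr, ← image_union] at hU
    have hcard : (A ∪ nbr (FS X ⊤) A).card = Fintype.card (Equiv.Perm (Fin n)) := by
      rw [← image_card g (A ∪ nbr (FS X ⊤) A), hU, card_univ]
    exact hA.1.1.2 (eq_univ_of_card _ hcard)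
  refine ⟨⟨hfam, ?_⟩, ?_⟩
  · rw [image_nbr, image_card, hA.1.2]
  · rw [image_card, hA.2]

lemma main_bound (hX : X.Connected) :
    ∀ A : Finset (Equiv.Perm (Fin n)), Fam (FS X ⊤) A →
      X.edgeFinset.card ≤ (nbr (FS X ⊤) A).card := by
  by_contra hcon
  push_neg at hcon
  obtain ⟨A, hAfam, hAlt⟩ := hcon
  have hκlt : kappa (FS X ⊤) < X.edgeFinset.card := lt_of_le_of_lt (kappa_le hAfam) hAlt
  obtain ⟨A0, hA0⟩ := atom_exists (G := FS X ⊤) ⟨A, hAfam⟩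
  obtain ⟨a, ha⟩ := hA0.1.1.1
  set H := A0.image (fun z => a⁻¹ * z) with hHdef
  have hH : Atom (FS X ⊤) H := atom_image a⁻¹ hA0
  have h1H : (1 : Equiv.Perm (Fin n)) ∈ H := mem_image.mpr ⟨a, ha, inv_mul_cancel a⟩
  have hmul : ∀ x ∈ H, ∀ y ∈ H, x * y ∈ H := by
    intro x hx y hy
    have hHx : Atom (FS X ⊤) (H.image (fun z => x * z)) := atom_image x hH
    have hxx : x ∈ H ∩ H.image (fun z => x * z) :=
      mem_inter.mpr ⟨hx, mem_image.mpr ⟨1, h1H, mul_one x⟩⟩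
    have heq : H = H.image (fun z => x * z) := atoms_eq hH hHx ⟨x, hxx⟩
    rw [heq]
    exact mem_image.mpr ⟨y, hy, rfl⟩
  have hinv : ∀ x ∈ H, x⁻¹ ∈ H := by
    intro x hx
    have hHx : Atom (FS X ⊤) (H.image (fun z => x⁻¹ * z)) := atom_image x⁻¹ hH
    have h1m : (1 : Equiv.Perm (Fin n)) ∈ H ∩ H.image (fun z => x⁻¹ * z) :=
      mem_inter.mpr ⟨h1H, mem_image.mpr ⟨x, hx, inv_mul_cancel x⟩⟩
    have heq : H = H.image (fun z => x⁻¹ * z) := atoms_eq hH hHx ⟨1, h1m⟩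
    rw [heq]
    exact mem_image.mpr ⟨1, h1H, mul_one x⁻¹⟩
  have hchain : ∀ i k j : Fin n, Equiv.swap i k ∈ H → Equiv.swap k j ∈ H →
      Equiv.swap i j ∈ H := by
    intro i k j h1 h2
    rcases eq_or_ne i j with rfl | hij
    · rw [Equiv.swap_self]; exact h1H
    rcases eq_or_ne k i with rfl | hki
    · exact h2
    rcases eq_or_ne k j with rfl | hkj
    · exact h1
    have hid := Equiv.swap_mul_swap_mul_swap (x := j) (y := k) (z := i) hkj.symm (Ne.symm hij)
    rw [← hid]
    have hki' : Equiv.swap k i ∈ H := by rwa [Equiv.swap_comm]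
    have hjk : Equiv.swap j k ∈ H := by rwa [Equiv.swap_comm]
    exact hmul _ (hmul _ hki' _ hjk) _ hki'
  have hRTG_swap : ∀ i j : Fin n,
      Relation.ReflTransGen (fun i j => X.Adj i j ∧ Equiv.swap i j ∈ H) i j →
      Equiv.swap i j ∈ H := by
    intro i j h
    induction h with
    | refl => rw [Equiv.swap_self]; exact h1H
    | tail hab hr ih => exact hchain _ _ _ ih hr.2
  have hwalkP : ∀ (σ τ : Equiv.Perm (Fin n)) (w : (FS X ⊤).Walk σ τ),
      (∀ y ∈ w.support, y ∈ H) →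
      (∀ x, Relation.ReflTransGen (fun i j => X.Adj i j ∧ Equiv.swap i j ∈ H) x (σ x)) →
      (∀ x, Relation.ReflTransGen (fun i j => X.Adj i j ∧ Equiv.swap i j ∈ H) x (τ x)) := by
    intro σ τ w
    induction w with
    | nil => intro _ h; exact h
    | @cons u b v hadj p ih =>
      intro hsup hP
      obtain ⟨t, ht, rfl⟩ := FS_adj.mp hadj
      obtain ⟨i, j, hij, rfl⟩ := mem_gens.mp ht
      refine ih ?_ ?_
      · intro y hy
        exact hsup y (by rw [Walk.support_cons]; exact List.mem_cons_of_mem _ hy)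
      · have hσH : u ∈ H := hsup u (Walk.start_mem_support _)
        have hbH : u * Equiv.swap i j ∈ H := by
          refine hsup _ ?_
          rw [Walk.support_cons]
          exact List.mem_cons_of_mem _ (Walk.start_mem_support p)
        have htH : Equiv.swap i j ∈ H := by
          have h5 := hmul _ (hinv _ hσH) _ hbH
          rwa [inv_mul_cancel_left] at h5
        intro x
        rcases eq_or_ne x i with rfl | hxi
        · have h1 : Relation.ReflTransGen
              (fun i j => X.Adj i j ∧ Equiv.swap i j ∈ H) x j :=
            Relation.ReflTransGen.single ⟨hij, htH⟩
          have happ : (u * Equiv.swap x j) x = u j := by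
            rw [Equiv.Perm.mul_apply, Equiv.swap_apply_left]
          rw [happ]
          exact h1.trans (hP j)
        rcases eq_or_ne x j with rfl | hxj
        · have h1 : Relation.ReflTransGen
              (fun i j => X.Adj i j ∧ Equiv.swap i j ∈ H) x i :=
            Relation.ReflTransGen.single ⟨X.adj_symm hij, by rwa [Equiv.swap_comm]⟩
          have happ : (u * Equiv.swap i x) x = u i := by
            rw [Equiv.Perm.mul_apply, Equiv.swap_apply_right]
          rw [happ]
          exact h1.trans (hP i)
        · have happ : (u * Equiv.swap i j) x = u x := by
            rw [Equiv.Perm.mul_apply, Equiv.swap_apply_of_ne_of_ne hxi hxj]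
          rw [happ]
          exact hP x
  have hswap_of_mem : ∀ h ∈ H, ∀ x : Fin n,
      Relation.ReflTransGen (fun i j => X.Adj i j ∧ Equiv.swap i j ∈ H) x (h x) := by
    intro h hh x
    obtain ⟨w, hw⟩ := atom_walks hH h1H hh
    refine hwalkP 1 h w hw (fun z => ?_) x
    rw [Equiv.Perm.one_apply]
  have hgensH : ¬ (gens X ⊆ H) := by
    intro hsub
    have hwr : ∀ (x y : Fin n), X.Walk x y →
        Relation.ReflTransGen (fun i j => X.Adj i j ∧ Equiv.swap i j ∈ H) x y := by
      intro x y w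
      induction w with
      | nil => exact Relation.ReflTransGen.refl
      | cons hadj p ih =>
        exact (Relation.ReflTransGen.single
          ⟨hadj, hsub (mem_gens.mpr ⟨_, _, hadj, rfl⟩)⟩).trans ih
    have hallswap : ∀ x y : Fin n, Equiv.swap x y ∈ H := by
      intro x y
      obtain ⟨w⟩ := hX.preconnected x y
      exact hRTG_swap x y (hwr x y w)
    have hall : ∀ σ : Equiv.Perm (Fin n), σ ∈ H := by
      intro σ
      refine Equiv.Perm.swap_induction_on σ h1H ?_
      intro f x y hxy hf
      exact hmul _ (hallswap x y) _ hf
    exact hH.1.1.2 (eq_univ_iff_forall.mpr fun σ => mem_union_left _ (hall σ))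
  set D := gens X \ H with hDdef
  have hDne : D.Nonempty := by
    obtain ⟨t, ht, htH⟩ := Finset.not_subset.mp hgensH
    exact ⟨t, mem_sdiff.mpr ⟨ht, htH⟩⟩
  have hprod : ∀ t1 ∈ D, ∀ t2 ∈ D, t1 ≠ t2 → t1 * t2 ∉ H := by
    intro t1 ht1 t2 ht2 hne hmem
    obtain ⟨ht1g, ht1H⟩ := mem_sdiff.mp ht1
    obtain ⟨a1, b1, hadj1, rfl⟩ := mem_gens.mp ht1g
    obtain ⟨a2, b2, hadj2, rfl⟩ := mem_gens.mp (mem_sdiff.mp ht2).1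
    have hpick : ∃ x y : Fin n, Equiv.swap x y = Equiv.swap a1 b1 ∧ X.Adj x y ∧
        x ≠ a2 ∧ x ≠ b2 := by
      by_cases h1 : a1 ≠ a2 ∧ a1 ≠ b2
      · exact ⟨a1, b1, rfl, hadj1, h1.1, h1.2⟩
      · push_neg at h1
        refine ⟨b1, a1, Equiv.swap_comm b1 a1, X.adj_symm hadj1, ?_, ?_⟩
        · intro hb
          by_cases ha' : a1 = a2
          · exact hadj1.ne (ha'.trans hb.symm)
          · have ha2 := h1 ha'
            apply hne
            rw [ha2, hb, Equiv.swap_comm]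
        · intro hb
          by_cases ha' : a1 = a2
          · exact hne (by rw [ha', hb])
          · have ha2 := h1 ha'
            exact hadj1.ne (ha2.trans hb.symm)
    obtain ⟨x, y, hswap, hadjxy, hxa2, hxb2⟩ := hpick
    have happ : (Equiv.swap a1 b1 * Equiv.swap a2 b2) x = y := by
      rw [Equiv.Perm.mul_apply, Equiv.swap_apply_of_ne_of_ne hxa2 hxb2, ← hswap,
        Equiv.swap_apply_left]
    have hr := hswap_of_mem _ hmem x
    rw [happ] at hr
    have hxy : Equiv.swap x y ∈ H := hRTG_swap x y hr
    rw [hswap] at hxy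
    exact ht1H hxy
  have hsubN : ∀ t ∈ D, ∀ h ∈ H, h * t ∈ nbr (FS X ⊤) H := by
    intro t ht h hh
    obtain ⟨htg, htH⟩ := mem_sdiff.mp ht
    refine (mem_nbr _).mpr ⟨?_, h, hh, FS_adj.mpr ⟨t, htg, rfl⟩⟩
    intro hmem
    have h5 := hmul _ (hinv _ hh) _ hmem
    rw [inv_mul_cancel_left] at h5
    exact htH h5
  have hbiU : D.biUnion (fun t => H.image (fun h => h * t)) ⊆ nbr (FS X ⊤) H := by
    intro z hz
    obtain ⟨t, ht, hz2⟩ := mem_biUnion.mp hz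
    obtain ⟨h, hh, rfl⟩ := mem_image.mp hz2
    exact hsubN t ht h hh
  have hdisj : ∀ t1 ∈ D, ∀ t2 ∈ D, t1 ≠ t2 →
      Disjoint (H.image (fun h => h * t1)) (H.image (fun h => h * t2)) := by
    intro t1 ht1 t2 ht2 hne
    rw [Finset.disjoint_left]
    rintro z hz1 hz2
    obtain ⟨h1, hh1, rfl⟩ := mem_image.mp hz1
    obtain ⟨h2, hh2, heq⟩ := mem_image.mp hz2
    have ht2' : t2⁻¹ = t2 := gens_inv (mem_sdiff.mp ht2).1
    have h6 : t1 = h1⁻¹ * (h2 * t2) := by rw [heq, inv_mul_cancel_left]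
    have ht22 : t2 * t2 = 1 := by nth_rewrite 1 [← ht2']; exact inv_mul_cancel t2
    have h7 : t1 * t2 = h1⁻¹ * h2 := by
      rw [h6, mul_assoc, mul_assoc, ht22, mul_one]
    exact hprod t1 ht1 t2 ht2 hne (h7 ▸ hmul _ (hinv _ hh1) _ hh2)
  have hcard1 : (D.biUnion fun t => H.image (fun h => h * t)).card = D.card * H.card := by
    rw [card_biUnion hdisj]
    rw [Finset.sum_congr rfl (fun t _ => card_image_of_injective H (mul_left_injective t))]
    rw [Finset.sum_const, smul_eq_mul]
  have hIH : (gens X ∩ H).card + 1 ≤ H.card := by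
    have hins : insert (1 : Equiv.Perm (Fin n)) (gens X ∩ H) ⊆ H := by
      intro z hz
      rcases mem_insert.mp hz with rfl | hz
      · exact h1H
      · exact (mem_inter.mp hz).2
    have h1n : (1 : Equiv.Perm (Fin n)) ∉ gens X ∩ H :=
      fun hz => gens_ne_one (mem_inter.mp hz).1 rfl
    calc (gens X ∩ H).card + 1 = (insert (1 : Equiv.Perm (Fin n)) (gens X ∩ H)).card := by
          rw [card_insert_of_notMem h1n]
      _ ≤ H.card := card_le_card hins
  have hsplit : (gens X ∩ H).card + D.card = (gens X).card :=
    card_inter_add_card_sdiff (gens X) H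
  have hm : X.edgeFinset.card = (gens X).card := card_gens.symm
  have hκH : (nbr (FS X ⊤) H).card = kappa (FS X ⊤) := hH.1.2
  have hle1 : D.card * H.card ≤ (nbr (FS X ⊤) H).card := hcard1 ▸ card_le_card hbiU
  have hd1 : 1 ≤ D.card := hDne.card_pos
  have hnl : (gens X ∩ H).card + D.card ≤ D.card * H.card := by
    have h8 : D.card * ((gens X ∩ H).card + 1) ≤ D.card * H.card :=
      Nat.mul_le_mul_left _ hIH
    have h9 : (gens X ∩ H).card + D.card ≤ D.card * ((gens X ∩ H).card + 1) := by
      rw [Nat.mul_add, Nat.mul_one]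
      have := Nat.le_mul_of_pos_left (gens X ∩ H).card (by omega : 0 < D.card)
      omega
    omega
  omega

lemma hard_dir (hX : X.Connected) : KConnected (FS X ⊤) X.edgeFinset.card := by
  intro S hSfin hScard
  rw [connected_iff]
  have hVlt : X.edgeFinset.card < Fintype.card (Equiv.Perm (Fin n)) := by
    have h1 : gens X ⊆ univ.erase 1 :=
      fun t ht => mem_erase.mpr ⟨gens_ne_one ht, mem_univ t⟩
    have h2 := card_le_card h1
    rw [card_erase_of_mem (mem_univ 1), card_univ] at h2
    have h3 := Fintype.card_pos (α := Equiv.Perm (Fin n))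
    have h4 := card_gens (X := X)
    omega
  have hF : S.ncard = hSfin.toFinset.card := Set.ncard_eq_toFinset_card S hSfin
  -- some vertex outside S
  have hSne : ∃ x : Equiv.Perm (Fin n), x ∉ S := by
    by_contra hc
    push_neg at hc
    have : (univ : Finset (Equiv.Perm (Fin n))) ⊆ hSfin.toFinset :=
      fun x _ => hSfin.mem_toFinset.mpr (hc x)
    have h5 := card_le_card this
    rw [card_univ] at h5
    omega
  obtain ⟨x0, hx0⟩ := hSne
  constructor
  · -- preconnected
    intro u v
    by_contra hr
    set A : Finset (Equiv.Perm (Fin n)) :=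
      @Finset.filter _ (fun x => x ∉ S ∧
        ∃ w : (FS X ⊤).Walk u.1 x, ∀ y ∈ w.support, y ∉ S)
        (Classical.decPred _) Finset.univ with hAdef
    have hmemA : ∀ x, x ∈ A ↔ x ∉ S ∧
        ∃ w : (FS X ⊤).Walk u.1 x, ∀ y ∈ w.support, y ∉ S := by
      intro x; rw [hAdef]; simp
    have huA : u.1 ∈ A := by
      refine (hmemA u.1).mpr ⟨u.2, Walk.nil, ?_⟩
      intro y hy
      rw [Walk.support_nil, List.mem_singleton] at hy
      exact hy ▸ u.2
    have hnbrA : nbr (FS X ⊤) A ⊆ hSfin.toFinset := by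
      intro x hx
      obtain ⟨hxA, y, hyA, hadj⟩ := (mem_nbr _).mp hx
      obtain ⟨hyS, w, hw⟩ := (hmemA y).mp hyA
      by_contra hxF
      have hxS : x ∉ S := fun hh => hxF (hSfin.mem_toFinset.mpr hh)
      refine hxA ((hmemA x).mpr ⟨hxS, w.concat hadj, ?_⟩)
      intro z hz
      rw [Walk.support_concat, List.mem_append,
        List.mem_singleton] at hz
      rcases hz with hz | rfl
      · exact hw z hz
      · exact hxS
    have hvA : v.1 ∉ A := by
      intro hvA
      obtain ⟨-, w, hw⟩ := (hmemA v.1).mp hvA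
      exact hr (induce_reachable_of_walk u.2 w hw)
    have hfam : Fam (FS X ⊤) A := by
      refine ⟨⟨u.1, huA⟩, ?_⟩
      intro hU
      have hvm : v.1 ∈ A ∪ nbr (FS X ⊤) A := hU ▸ mem_univ v.1
      rcases mem_union.mp hvm with h | h
      · exact hvA h
      · exact v.2 (hSfin.mem_toFinset.mp (hnbrA h))
    have hmb := main_bound hX A hfam
    have hc2 := card_le_card hnbrA
    omega
  · exact ⟨⟨x0, hx0⟩⟩

lemma upper_dir (hn : 3 ≤ n) : ¬ KConnected (FS X ⊤) (X.edgeFinset.card + 1) := by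
  intro h
  have h0 : (0 : ℕ) < n := by omega
  have h1 : (1 : ℕ) < n := by omega
  have h2 : (2 : ℕ) < n := by omega
  set i0 : Fin n := ⟨0, h0⟩ with hi0
  set i1 : Fin n := ⟨1, h1⟩ with hi1
  set i2 : Fin n := ⟨2, h2⟩ with hi2
  have h01 : i0 ≠ i1 := by simp [hi0, hi1, Fin.ext_iff]
  have h12 : i1 ≠ i2 := by simp [hi1, hi2, Fin.ext_iff]
  have h02 : i0 ≠ i2 := by simp [hi0, hi2, Fin.ext_iff]
  set c := Equiv.swap i0 i1 * Equiv.swap i1 i2 with hc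
  have hc0 : c i0 = i1 := by
    rw [hc, Equiv.Perm.mul_apply, Equiv.swap_apply_of_ne_of_ne h01 h02,
      Equiv.swap_apply_left]
  have hc1 : c i1 = i2 := by
    rw [hc, Equiv.Perm.mul_apply, Equiv.swap_apply_left]
    rw [Equiv.swap_apply_of_ne_of_ne h02.symm h12.symm]
  have hcc : (c * c) i0 = i2 := by rw [Equiv.Perm.mul_apply, hc0, hc1]
  have hcne1 : c ≠ 1 := by
    intro hh
    rw [hh, Equiv.Perm.one_apply] at hc0
    exact h01 hc0
  have hcgens : c ∉ gens X := by
    intro hg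
    obtain ⟨i, j, hij, hceq⟩ := mem_gens.mp hg
    have hsq : c * c = 1 := by rw [hceq, Equiv.swap_mul_self]
    rw [hsq, Equiv.Perm.one_apply] at hcc
    exact h02 hcc
  have hfin : (↑(gens X) : Set (Equiv.Perm (Fin n))).Finite := (gens X).finite_toSet
  have hcard : (↑(gens X) : Set (Equiv.Perm (Fin n))).ncard < X.edgeFinset.card + 1 := by
    rw [Set.ncard_coe_finset, card_gens]
    omega
  have hconn := h (↑(gens X)) hfin hcard
  have h1c : (1 : Equiv.Perm (Fin n)) ∈ ((↑(gens X) : Set (Equiv.Perm (Fin n)))ᶜ) :=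
    fun hm => gens_ne_one hm rfl
  have hcc' : c ∈ ((↑(gens X) : Set (Equiv.Perm (Fin n)))ᶜ) := fun hm => hcgens hm
  have hreach := hconn.preconnected ⟨1, h1c⟩ ⟨c, hcc'⟩
  obtain ⟨w, hw⟩ := walk_of_induce_reachable hreach
  have hnbr1 : nbr (FS X ⊤) {1} ⊆ gens X := by
    intro x hx
    obtain ⟨hx1, y, hy, hadj⟩ := (mem_nbr _).mp hx
    rw [mem_singleton] at hy
    subst hy
    obtain ⟨t, ht, rfl⟩ := FS_adj.mp hadj
    rwa [one_mul]
  have hcA : c ∈ ({1} : Finset (Equiv.Perm (Fin n))) := by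
    refine walk_exit w (mem_singleton_self 1) ?_
    intro x hxs hxn
    exact hw x hxs (hnbr1 hxn)
  exact hcne1 (mem_singleton.mp hcA)

end Specific

end FSAux

open FSAux

/-- For `n ≥ 3` and connected `X`, the connectivity of `FS(X, Kₙ)` equals
its minimum degree, namely the number of edges of `X`. -/
theorem stmt_8 (n : ℕ) (hn : 3 ≤ n) (X : SimpleGraph (Fin n))
    [DecidableRel X.Adj] (hX : X.Connected) :
    connectivity (FS X (⊤ : SimpleGraph (Fin n))) = X.edgeFinset.card := by
  have hkc := hard_dir (X := X) hX
  have hnot := upper_dir (X := X) hn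
  have hmono : ∀ j k : ℕ, j ≤ k → KConnected (FS X ⊤) k → KConnected (FS X ⊤) j :=
    fun j k hjk h S h1 h2 => h S h1 (lt_of_lt_of_le h2 hjk)
  have hub : ∀ b ∈ {k | KConnected (FS X ⊤) k}, b ≤ X.edgeFinset.card := by
    intro b hb
    by_contra hbgt
    push_neg at hbgt
    exact hnot (hmono _ _ (by omega) hb)
  apply le_antisymm
  · exact csSup_le ⟨_, hkc⟩ hub
  · exact le_csSup ⟨X.edgeFinset.card, hub⟩ hkc
end

section
/- Let $n \ge k+1$ and suppose that for every permutation $\sigma$ of $[n]$ and every edge $(u',v')$ of $X$, there exist $k$ internally vertex-disjoint paths in $\mathrm{FS}(X,Y)$ between $\sigma$ and $\sigma \circ (u'\ v')$, where $X$ is connected. Then $\mathrm{FS}(X,Y)$ is $k$-connected. -/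
open SimpleGraph

section FSaux
variable {V : Type*} [Fintype V] [DecidableEq V]

lemma reachable_induce_of_walk' {W : Type*} {G : SimpleGraph W} {s : Set W} :
    ∀ {u v : W} (w : G.Walk u v) (hs : ∀ x ∈ w.support, x ∈ s),
      (G.induce s).Reachable ⟨u, hs u w.start_mem_support⟩ ⟨v, hs v w.end_mem_support⟩ := by
  intro u v w
  induction w with
  | nil => intro hs; exact Reachable.refl _
  | cons hadj w ih =>
    intro hs
    have h1 : ∀ x ∈ w.support, x ∈ s := fun x hx => hs x (by simp [Walk.support_cons, hx])
    refine Reachable.trans (Adj.reachable ?_) (ih h1)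
    exact hadj

lemma reachable_induce_map' {W : Type*} {G₁ G₂ : SimpleGraph W} {s t : Set W}
    (f : W → W) (hadj : ∀ x y, G₁.Adj x y → G₂.Adj (f x) (f y))
    (hmap : ∀ x ∈ s, f x ∈ t) {u v : W} (hu : u ∈ s) (hv : v ∈ s)
    (h : (G₁.induce s).Reachable ⟨u, hu⟩ ⟨v, hv⟩) :
    (G₂.induce t).Reachable ⟨f u, hmap u hu⟩ ⟨f v, hmap v hv⟩ := by
  let F : G₁.induce s →g G₂.induce t :=
    ⟨fun x => ⟨f x.1, hmap x.1 x.2⟩, fun h => hadj _ _ h⟩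
  exact h.map F

lemma exists_noncut_abstract {W : Type*} [Fintype W] (G : SimpleGraph W)
    (hconn : G.Preconnected) (h2 : 2 ≤ Fintype.card W) :
    ∃ l : W, (∃ p : W, G.Adj l p) ∧
      ∀ u v : W, u ≠ l → v ≠ l → ∃ w : G.Walk u v, l ∉ w.support := by
  classical
  have hne : Nonempty W := Fintype.card_pos_iff.mp (by omega)
  obtain ⟨r⟩ := hne
  obtain ⟨l, -, hmax⟩ := Finset.exists_max_image Finset.univ (fun v => G.dist r v)
    ⟨r, Finset.mem_univ r⟩
  have hnt : Nontrivial W := Fintype.one_lt_card_iff_nontrivial.mp (by omega)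
  obtain ⟨v₀, hv₀⟩ := exists_ne r
  have hdv₀ : 1 ≤ G.dist r v₀ := by
    rcases Nat.eq_zero_or_pos (G.dist r v₀) with h0 | h
    · obtain ⟨w, hw⟩ := (hconn r v₀).exists_walk_length_eq_dist
      rw [h0] at hw
      exact absurd (Walk.eq_of_length_eq_zero hw).symm hv₀
    · exact h
  have hdl : 1 ≤ G.dist r l := le_trans hdv₀ (hmax v₀ (Finset.mem_univ _))
  have hlr : l ≠ r := by
    intro he; rw [he] at hdl; simp [SimpleGraph.dist_self] at hdl
  have key : ∀ v : W, v ≠ l → ∃ w : G.Walk r v, l ∉ w.support := by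
    intro v hv
    obtain ⟨w, hw⟩ := (hconn r v).exists_walk_length_eq_dist
    refine ⟨w, ?_⟩
    intro hmem
    have h1 : G.dist r l ≤ (w.takeUntil l hmem).length := dist_le _
    have h2 : 1 ≤ (w.dropUntil l hmem).length := by
      rcases Nat.eq_zero_or_pos (w.dropUntil l hmem).length with h0 | h
      · exact absurd (Walk.eq_of_length_eq_zero h0) hv.symm
      · exact h
    have h3 : (w.takeUntil l hmem).length + (w.dropUntil l hmem).length = w.length := by
      rw [← Walk.length_append, Walk.take_spec]
    have h4 : G.dist r v ≤ G.dist r l := hmax v (Finset.mem_univ _)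
    omega
  have hnb : ∃ p : W, G.Adj l p := by
    obtain ⟨w, -⟩ := (hconn l r).exists_walk_length_eq_dist
    cases w with
    | nil => exact absurd rfl hlr
    | cons hadj w => exact ⟨_, hadj⟩
  refine ⟨l, hnb, ?_⟩
  intro u v hu hv
  obtain ⟨w1, hw1⟩ := key u hu
  obtain ⟨w2, hw2⟩ := key v hv
  refine ⟨w1.reverse.append w2, ?_⟩
  rw [Walk.mem_support_append_iff, Walk.support_reverse, List.mem_reverse]
  tauto

lemma exists_noncut (X : SimpleGraph V) (A : Finset V) (hA : 2 ≤ A.card)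
    (hconn : (X.induce (A : Set V)).Preconnected) :
    ∃ l ∈ A, (∃ p ∈ A, p ≠ l ∧ X.Adj l p) ∧
      (X.induce ((A.erase l : Finset V) : Set V)).Preconnected := by
  classical
  have hcard : 2 ≤ Fintype.card ↥(A : Set V) := by simpa using hA
  obtain ⟨l', ⟨p', hadj'⟩, hkey⟩ := exists_noncut_abstract _ hconn hcard
  have hXlp : X.Adj l'.1 p'.1 := hadj'
  refine ⟨l'.1, l'.2, ⟨p'.1, p'.2, hXlp.ne', hXlp⟩, ?_⟩
  rintro ⟨u, hu⟩ ⟨v, hv⟩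
  have huA : u ∈ A := Finset.mem_of_mem_erase (by exact_mod_cast hu)
  have hvA : v ∈ A := Finset.mem_of_mem_erase (by exact_mod_cast hv)
  have hul : u ≠ l'.1 := Finset.ne_of_mem_erase (by exact_mod_cast hu)
  have hvl : v ≠ l'.1 := Finset.ne_of_mem_erase (by exact_mod_cast hv)
  obtain ⟨w, hw⟩ := hkey ⟨u, huA⟩ ⟨v, hvA⟩ (fun he => hul (congrArg Subtype.val he))
    (fun he => hvl (congrArg Subtype.val he))
  let F : (X.induce (A : Set V)) →g X := ⟨Subtype.val, fun h => h⟩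
  have hsupp : ∀ x ∈ (w.map F).support, x ∈ ((A.erase l'.1 : Finset V) : Set V) := by
    intro x hx
    rw [Walk.support_map, List.mem_map] at hx
    obtain ⟨y, hy, rfl⟩ := hx
    have hyl : y ≠ l' := fun he => hw (he ▸ hy)
    simp only [Finset.coe_sort_coe, Finset.mem_coe]
    exact Finset.mem_erase.mpr ⟨fun he => hyl (Subtype.ext he), y.2⟩
  exact reachable_induce_of_walk' (w.map F) hsupp

def CayOn (X : SimpleGraph V) (A : Finset V) : SimpleGraph (Equiv.Perm V) :=
  SimpleGraph.fromRel (fun σ τ => ∃ i ∈ A, ∃ j ∈ A, X.Adj i j ∧ τ = σ * Equiv.swap i j)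

def FixOut (A : Finset V) : Set (Equiv.Perm V) := {σ | ∀ x, x ∉ A → σ x = x}

def Blk (A : Finset V) (l a : V) : Set (Equiv.Perm V) := {σ | σ ∈ FixOut A ∧ σ l = a}

lemma fixOut_maps {A : Finset V} {σ : Equiv.Perm V} (hσ : σ ∈ FixOut A)
    {x : V} (hx : x ∈ A) : σ x ∈ A := by
  by_contra hc
  have h1 : σ (σ x) = σ x := hσ _ hc
  have h2 : σ x = x := σ.injective h1
  exact hc (h2.symm ▸ hx)

lemma fixOut_mul_swap {A : Finset V} {σ : Equiv.Perm V} (hσ : σ ∈ FixOut A)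
    {i j : V} (hi : i ∈ A) (hj : j ∈ A) : σ * Equiv.swap i j ∈ FixOut A := by
  intro x hx
  have h1 : Equiv.swap i j x = x :=
    Equiv.swap_apply_of_ne_of_ne (fun he => hx (he ▸ hi)) (fun he => hx (he ▸ hj))
  show σ (Equiv.swap i j x) = x
  rw [h1]; exact hσ x hx

lemma cayOn_adj_mul_swap (X : SimpleGraph V) {A : Finset V} (σ : Equiv.Perm V)
    {i j : V} (hi : i ∈ A) (hj : j ∈ A) (hX : X.Adj i j) :
    (CayOn X A).Adj σ (σ * Equiv.swap i j) := by
  have hne : σ ≠ σ * Equiv.swap i j := by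
    intro he
    have : σ i = σ j := by
      conv_lhs => rw [he]
      show σ (Equiv.swap i j i) = σ j
      rw [Equiv.swap_apply_left]
    exact absurd (σ.injective this) hX.ne
  exact SimpleGraph.fromRel_adj .. |>.mpr ⟨hne, Or.inl ⟨i, hi, j, hj, hX, rfl⟩⟩

lemma cross_exists {A : Finset V} {l p a b : V}
    (hl : l ∈ A) (hp : p ∈ A) (hpl : p ≠ l) (ha : a ∈ A) (hb : b ∈ A)
    {S : Set (Equiv.Perm V)} (hab : a ≠ b)
    (hkill : ∀ s ∈ S, ¬(s l = a ∧ s p = b) ∧ ¬(s l = b ∧ s p = a)) :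
    ∃ σ : Equiv.Perm V, σ ∈ FixOut A ∧ σ l = a ∧ σ p = b ∧ σ ∉ S ∧
      σ * Equiv.swap l p ∉ S := by
  classical
  set σ1 := Equiv.swap l a with hσ1
  set q := σ1 b with hq
  have hσ1l : σ1 l = a := Equiv.swap_apply_left l a
  have hσ1q : σ1 q = b := Equiv.swap_apply_self l a b
  have hlq : l ≠ q := fun he => hab (by rw [← hσ1l, he, hσ1q])
  have hqA : q ∈ A := by
    rw [hq, hσ1, Equiv.swap_apply_def]
    split_ifs <;> assumption
  have main : ∃ σ : Equiv.Perm V, σ ∈ FixOut A ∧ σ l = a ∧ σ p = b := by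
    by_cases hpq : p = q
    · refine ⟨σ1, ?_, hσ1l, by rw [hpq]; exact hσ1q⟩
      intro x hx
      exact Equiv.swap_apply_of_ne_of_ne (fun he => hx (he ▸ hl)) (fun he => hx (he ▸ ha))
    · refine ⟨σ1 * Equiv.swap p q, ?_, ?_, ?_⟩
      · intro x hx
        have e1 : Equiv.swap p q x = x :=
          Equiv.swap_apply_of_ne_of_ne (fun he => hx (by rw [he]; exact hp))
            (fun he => hx (by rw [he]; exact hqA))
        show σ1 (Equiv.swap p q x) = x
        rw [e1]
        exact Equiv.swap_apply_of_ne_of_ne (fun he => hx (by rw [he]; exact hl))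
          (fun he => hx (by rw [he]; exact ha))
      · have e1 : Equiv.swap p q l = l :=
          Equiv.swap_apply_of_ne_of_ne (fun he => hpl he.symm) hlq
        show σ1 (Equiv.swap p q l) = a
        rw [e1]; exact hσ1l
      · show σ1 (Equiv.swap p q p) = b
        rw [Equiv.swap_apply_left]; exact hσ1q
  obtain ⟨σ, hσF, hσl, hσp⟩ := main
  have hτl : (σ * Equiv.swap l p) l = b := by
    show σ (Equiv.swap l p l) = b
    rw [Equiv.swap_apply_left]; exact hσp
  have hτp : (σ * Equiv.swap l p) p = a := by
    show σ (Equiv.swap l p p) = a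
    rw [Equiv.swap_apply_right]; exact hσl
  refine ⟨σ, hσF, hσl, hσp, fun hσS => (hkill σ hσS).1 ⟨hσl, hσp⟩,
    fun hτS => (hkill _ hτS).2 ⟨hτl, hτp⟩⟩

lemma cayOn_small (X : SimpleGraph V) (A : Finset V) (h1 : A.card ≤ 1)
    (S : Set (Equiv.Perm V)) (hS : S.ncard ≤ A.card - 2) :
    ((CayOn X A).induce (FixOut A \ S)).Preconnected := by
  have hid : ∀ σ ∈ FixOut A, σ = 1 := by
    intro σ hσ
    apply Equiv.ext
    intro x
    by_cases hx : x ∈ A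
    · have h2 := fixOut_maps hσ hx
      have h3 := Finset.card_le_one.mp h1 _ h2 _ hx
      simpa using h3
    · simpa using hσ x hx
  rintro ⟨σ, hσmem⟩ ⟨τ, hτmem⟩
  have : σ = τ := (hid σ hσmem.1).trans (hid τ hτmem.1).symm
  subst this
  exact Reachable.refl _



lemma pat_eq {α : Type*} {a b d d' u v : α} (hda : d ≠ a) (hdb : d ≠ b)
    (hd'a : d' ≠ a) (hd'b : d' ≠ b)
    (p1 : (u = a ∧ v = d) ∨ (u = d ∧ v = a) ∨ (u = d ∧ v = b) ∨ (u = b ∧ v = d))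
    (p2 : (u = a ∧ v = d') ∨ (u = d' ∧ v = a) ∨ (u = d' ∧ v = b) ∨ (u = b ∧ v = d')) :
    d = d' := by
  rcases p1 with ⟨q1, q2⟩ | ⟨q1, q2⟩ | ⟨q1, q2⟩ | ⟨q1, q2⟩ <;>
    rcases p2 with ⟨r1, r2⟩ | ⟨r1, r2⟩ | ⟨r1, r2⟩ | ⟨r1, r2⟩ <;> simp_all

lemma pat_ne {α : Type*} {a b d u v : α} (hda : d ≠ a) (hdb : d ≠ b) (hab : a ≠ b)
    (p1 : (u = a ∧ v = d) ∨ (u = d ∧ v = a) ∨ (u = d ∧ v = b) ∨ (u = b ∧ v = d))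
    (p2 : (u = a ∧ v = b) ∨ (u = b ∧ v = a)) : False := by
  rcases p1 with ⟨q1, q2⟩ | ⟨q1, q2⟩ | ⟨q1, q2⟩ | ⟨q1, q2⟩ <;>
    rcases p2 with ⟨r1, r2⟩ | ⟨r1, r2⟩ <;> simp_all

set_option maxHeartbeats 1600000 in
lemma cayOn_key (X : SimpleGraph V) :
    ∀ (N : ℕ) (A : Finset V), A.card ≤ N →
      (X.induce (A : Set V)).Preconnected →
      ∀ S : Set (Equiv.Perm V), S.ncard ≤ A.card - 2 →
      ((CayOn X A).induce (FixOut A \ S)).Preconnected := by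
  classical
  intro N
  induction N with
  | zero =>
    intro A hA hconn S hS
    exact cayOn_small X A (by omega) S hS
  | succ N IH =>
    intro A hA hconn S hS
    by_cases hsmall : A.card ≤ 1
    · exact cayOn_small X A hsmall S hS
    · push_neg at hsmall
      have hm2 : 2 ≤ A.card := hsmall
      obtain ⟨l, hlA, ⟨p, hpA, hpl, hXlp⟩, hconn'⟩ := exists_noncut X A hm2 hconn
      have hA'card : (A.erase l).card = A.card - 1 := Finset.card_erase_of_mem hlA
      have hA'sub : (A.erase l) ⊆ A := Finset.erase_subset l A
      have hSfin : S.Finite := Set.toFinite S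
      -- at most one bad block
      have hone : ∀ c₁ ∈ A, ∀ c₂ ∈ A, c₁ ≠ c₂ →
          ¬ ((S ∩ Blk A l c₁).ncard ≤ A.card - 3) →
          ¬ ((S ∩ Blk A l c₂).ncard ≤ A.card - 3) → False := by
        intro c₁ h1 c₂ h2 hne hb1 hb2
        have hd : Disjoint (S ∩ Blk A l c₁) (S ∩ Blk A l c₂) := by
          rw [Set.disjoint_left]
          rintro σ ⟨-, -, he1⟩ ⟨-, -, he2⟩
          exact hne (he1 ▸ he2 ▸ rfl)
        have hle : (S ∩ Blk A l c₁).ncard + (S ∩ Blk A l c₂).ncard ≤ S.ncard := by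
          rw [← Set.ncard_union_eq hd (Set.toFinite _) (Set.toFinite _)]
          exact Set.ncard_le_ncard
            (Set.union_subset Set.inter_subset_left Set.inter_subset_left) hSfin
        omega
      -- a bad block contains all of S
      have hbadsub : ∀ c, ¬ ((S ∩ Blk A l c).ncard ≤ A.card - 3) → S ⊆ Blk A l c := by
        intro c hc
        have hsub : (S ∩ Blk A l c).ncard ≤ S.ncard :=
          Set.ncard_le_ncard Set.inter_subset_left hSfin
        have heq : S ∩ Blk A l c = S :=
          Set.eq_of_subset_of_ncard_le Set.inter_subset_left (by omega) hSfin
        intro s hs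
        have : s ∈ S ∩ Blk A l c := heq.symm ▸ hs
        exact this.2
      -- within-block reachability (via induction hypothesis)
      have hwithin : ∀ a ∈ A, ((S ∩ Blk A l a).ncard ≤ A.card - 3) →
          ∀ σ, σ ∈ Blk A l a → σ ∉ S → ∀ τ, τ ∈ Blk A l a → τ ∉ S →
          ∀ (hσ : σ ∈ FixOut A \ S) (hτ : τ ∈ FixOut A \ S),
          ((CayOn X A).induce (FixOut A \ S)).Reachable ⟨σ, hσ⟩ ⟨τ, hτ⟩ := by
        intro a haA hgood σ hσB hσS τ hτB hτS hσ hτ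
        set f : Equiv.Perm V → Equiv.Perm V := fun ρ => Equiv.swap a l * ρ with hf
        set S' : Set (Equiv.Perm V) := f '' (S ∩ Blk A l a) with hS'
        have hfinv : ∀ ρ, f (f ρ) = ρ := by
          intro ρ
          show Equiv.swap a l * (Equiv.swap a l * ρ) = ρ
          rw [← mul_assoc, Equiv.swap_mul_self, one_mul]
        have hfinj : Function.Injective f := fun x y he => by
          have := congrArg f he; rwa [hfinv, hfinv] at this
        have hS'card : S'.ncard = (S ∩ Blk A l a).ncard :=
          Set.ncard_image_of_injective _ hfinj
        have hIH := IH (A.erase l) (by omega) hconn' S' (by rw [hS'card, hA'card]; omega)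
        have hmemb : ∀ ρ, ρ ∈ Blk A l a → ρ ∉ S → f ρ ∈ FixOut (A.erase l) \ S' := by
          intro ρ hρB hρS
          constructor
          · intro x hx
            by_cases hxl : x = l
            · show Equiv.swap a l (ρ x) = x
              rw [hxl, hρB.2, Equiv.swap_apply_left]
            · have hxA : x ∉ A := fun hc => hx (Finset.mem_erase.mpr ⟨hxl, hc⟩)
              show Equiv.swap a l (ρ x) = x
              rw [hρB.1 x hxA]
              exact Equiv.swap_apply_of_ne_of_ne (fun he => hxA (he ▸ haA)) hxl
          · rintro ⟨s, hs, he⟩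
            have : s = ρ := hfinj he
            exact hρS (this ▸ hs.1)
        have hadjf : ∀ x y, (CayOn X (A.erase l)).Adj x y → (CayOn X A).Adj (f x) (f y) := by
          intro x y hxy
          rw [CayOn, SimpleGraph.fromRel_adj] at hxy ⊢
          obtain ⟨hne, hrel⟩ := hxy
          refine ⟨fun he => hne (hfinj he), ?_⟩
          rcases hrel with ⟨i, hi, j, hj, hXij, he⟩ | ⟨i, hi, j, hj, hXij, he⟩
          · exact Or.inl ⟨i, hA'sub hi, j, hA'sub hj, hXij, by rw [hf]; simp only
              [he, mul_assoc]⟩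
          · exact Or.inr ⟨i, hA'sub hi, j, hA'sub hj, hXij, by rw [hf]; simp only
              [he, mul_assoc]⟩
        have hmap : ∀ x ∈ FixOut (A.erase l) \ S', f x ∈ FixOut A \ S := by
          intro x hx
          have hFix : f x ∈ FixOut A := by
            intro z hz
            have hzA' : z ∉ A.erase l := fun hc => hz (hA'sub hc)
            show Equiv.swap a l (x z) = z
            rw [hx.1 z hzA']
            exact Equiv.swap_apply_of_ne_of_ne (fun he => hz (he ▸ haA)) (fun he => hz (he ▸ hlA))
          refine ⟨hFix, ?_⟩
          intro hfS
          have hxl : x l = l := hx.1 l (Finset.notMem_erase l A)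
          have hfl : (f x) l = a := by
            show Equiv.swap a l (x l) = a
            rw [hxl, Equiv.swap_apply_right]
          have : x ∈ S' := by
            refine ⟨f x, ⟨hfS, hFix, hfl⟩, hfinv x⟩
          exact hx.2 this
        have h1 := hmemb σ hσB hσS
        have h2 := hmemb τ hτB hτS
        have hr := hIH ⟨f σ, h1⟩ ⟨f τ, h2⟩
        have key := reachable_induce_map' f hadjf hmap h1 h2 hr
        rw [show (⟨f (f σ), hmap _ h1⟩ : ↥(FixOut A \ S)) = ⟨σ, hσ⟩ from
          Subtype.ext (hfinv σ)] at key
        rw [show (⟨f (f τ), hmap _ h2⟩ : ↥(FixOut A \ S)) = ⟨τ, hτ⟩ from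
          Subtype.ext (hfinv τ)] at key
        exact key
      -- cross-block reachability through an unkilled pair
      have hcross : ∀ a ∈ A, ∀ b ∈ A, ((S ∩ Blk A l a).ncard ≤ A.card - 3) →
          ((S ∩ Blk A l b).ncard ≤ A.card - 3) → a ≠ b →
          (∀ s ∈ S, ¬(s l = a ∧ s p = b) ∧ ¬(s l = b ∧ s p = a)) →
          ∀ σ, σ ∈ Blk A l a → σ ∉ S → ∀ τ, τ ∈ Blk A l b → τ ∉ S →
          ∀ (hσ : σ ∈ FixOut A \ S) (hτ : τ ∈ FixOut A \ S),
          ((CayOn X A).induce (FixOut A \ S)).Reachable ⟨σ, hσ⟩ ⟨τ, hτ⟩ := by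
        intro a haA b hbA hga hgb hab hkill σ hσB hσS τ hτB hτS hσ hτ
        obtain ⟨σ', hσ'F, hσ'l, hσ'p, hσ'S, hτ'S⟩ := cross_exists hlA hpA hpl haA hbA hab hkill
        have hτ'F : σ' * Equiv.swap l p ∈ FixOut A := fixOut_mul_swap hσ'F hlA hpA
        have hτ'l : (σ' * Equiv.swap l p) l = b := by
          show σ' (Equiv.swap l p l) = b
          rw [Equiv.swap_apply_left]; exact hσ'p
        have hσ'mem : σ' ∈ FixOut A \ S := ⟨hσ'F, hσ'S⟩
        have hτ'mem : σ' * Equiv.swap l p ∈ FixOut A \ S := ⟨hτ'F, hτ'S⟩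
        have r1 := hwithin a haA hga σ hσB hσS σ' ⟨hσ'F, hσ'l⟩ hσ'S hσ hσ'mem
        have r2 : ((CayOn X A).induce (FixOut A \ S)).Adj ⟨σ', hσ'mem⟩
            ⟨σ' * Equiv.swap l p, hτ'mem⟩ := cayOn_adj_mul_swap X σ' hlA hpA hXlp
        have r3 := hwithin b hbA hgb (σ' * Equiv.swap l p) ⟨hτ'F, hτ'l⟩ hτ'S τ hτB hτS hτ'mem hτ
        exact r1.trans (r2.reachable.trans r3)
      -- escape from a bad block
      have hescape : ∀ c, ¬ ((S ∩ Blk A l c).ncard ≤ A.card - 3) →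
          ∀ σ, σ ∈ Blk A l c → σ ∉ S → ∃ b ∈ A, ((S ∩ Blk A l b).ncard ≤ A.card - 3) ∧
          ∃ τ, τ ∈ Blk A l b ∧ τ ∉ S ∧ (CayOn X A).Adj σ τ := by
        intro c hc σ hσB hσS
        have hσF := hσB.1
        have hbA : σ p ∈ A := fixOut_maps hσF hpA
        have hcA : c ∈ A := by rw [← hσB.2]; exact fixOut_maps hσF hlA
        have hbc : σ p ≠ c := by
          intro he
          have : σ p = σ l := he.trans hσB.2.symm
          exact hpl (σ.injective this)
        have hgb : (S ∩ Blk A l (σ p)).ncard ≤ A.card - 3 := by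
          by_contra hng
          exact hone c hcA (σ p) hbA (Ne.symm hbc) hc hng
        have hτl : (σ * Equiv.swap l p) l = σ p := by
          show σ (Equiv.swap l p l) = σ p
          rw [Equiv.swap_apply_left]
        refine ⟨σ p, hbA, hgb, σ * Equiv.swap l p,
          ⟨fixOut_mul_swap hσF hlA hpA, hτl⟩, ?_, cayOn_adj_mul_swap X σ hlA hpA hXlp⟩
        intro hτS
        have := (hbadsub c hc hτS).2
        rw [hτl] at this
        exact hbc this
      -- the path-of-blocks lemma (counting)
      have hpath : ∀ a ∈ A, ∀ b ∈ A, ((S ∩ Blk A l a).ncard ≤ A.card - 3) →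
          ((S ∩ Blk A l b).ncard ≤ A.card - 3) → a ≠ b →
          (∀ s ∈ S, ¬(s l = a ∧ s p = b) ∧ ¬(s l = b ∧ s p = a)) ∨
          ∃ d ∈ A, ((S ∩ Blk A l d).ncard ≤ A.card - 3) ∧ d ≠ a ∧ d ≠ b ∧
            (∀ s ∈ S, ¬(s l = a ∧ s p = d) ∧ ¬(s l = d ∧ s p = a)) ∧
            (∀ s ∈ S, ¬(s l = d ∧ s p = b) ∧ ¬(s l = b ∧ s p = d)) := by
        intro a haA b hbA hga hgb hab
        by_cases hbad : ∃ c ∈ A, ¬ ((S ∩ Blk A l c).ncard ≤ A.card - 3)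
        · obtain ⟨c, hcA, hc⟩ := hbad
          have hsub := hbadsub c hc
          have hca : c ≠ a := fun he => hc (he ▸ hga)
          have hcb : c ≠ b := fun he => hc (he ▸ hgb)
          left
          intro s hs
          have hsl : s l = c := (hsub hs).2
          exact ⟨fun h => hca (hsl.symm.trans h.1), fun h => hcb (hsl.symm.trans h.1)⟩
        · push_neg at hbad
          rcases Classical.em (∀ s ∈ S, ¬(s l = a ∧ s p = b) ∧ ¬(s l = b ∧ s p = a))
            with hyes | hno
          · exact Or.inl hyes
          · right
            obtain ⟨s₀, hs₀'⟩ := not_forall.mp hno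
            have hs₀S : s₀ ∈ S := by
              by_contra hcon; exact hs₀' (fun hm => absurd hm hcon)
            have hs₀pat : (s₀ l = a ∧ s₀ p = b) ∨ (s₀ l = b ∧ s₀ p = a) := by
              have hp' : ¬(¬(s₀ l = a ∧ s₀ p = b) ∧ ¬(s₀ l = b ∧ s₀ p = a)) :=
                fun hcc => hs₀' fun _ => hcc
              rcases not_and_or.mp hp' with h | h
              · exact Or.inl (not_not.mp h)
              · exact Or.inr (not_not.mp h)
            by_contra hnod
            have hchoose : ∀ d ∈ A \ {a, b}, ∃ s, s ∈ S ∧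
                ((s l = a ∧ s p = d) ∨ (s l = d ∧ s p = a) ∨
                 (s l = d ∧ s p = b) ∨ (s l = b ∧ s p = d)) := by
              intro d hd
              rw [Finset.mem_sdiff, Finset.mem_insert, Finset.mem_singleton] at hd
              obtain ⟨hdA, hdne⟩ := hd
              have hda : d ≠ a := fun he => hdne (Or.inl he)
              have hdb : d ≠ b := fun he => hdne (Or.inr he)
              have hnk : ¬((∀ s ∈ S, ¬(s l = a ∧ s p = d) ∧ ¬(s l = d ∧ s p = a)) ∧
                    (∀ s ∈ S, ¬(s l = d ∧ s p = b) ∧ ¬(s l = b ∧ s p = d))) :=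
                fun hcc => hnod ⟨d, hdA, hbad d hdA, hda, hdb, hcc.1, hcc.2⟩
              rcases not_and_or.mp hnk with hk | hk
              · obtain ⟨s, hs⟩ := not_forall.mp hk
                have hsS : s ∈ S := by
                  by_contra hcon; exact hs (fun hm => absurd hm hcon)
                have hp' : ¬(¬(s l = a ∧ s p = d) ∧ ¬(s l = d ∧ s p = a)) :=
                  fun hcc => hs fun _ => hcc
                rcases not_and_or.mp hp' with h | h
                · exact ⟨s, hsS, Or.inl (not_not.mp h)⟩
                · exact ⟨s, hsS, Or.inr (Or.inl (not_not.mp h))⟩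
              · obtain ⟨s, hs⟩ := not_forall.mp hk
                have hsS : s ∈ S := by
                  by_contra hcon; exact hs (fun hm => absurd hm hcon)
                have hp' : ¬(¬(s l = d ∧ s p = b) ∧ ¬(s l = b ∧ s p = d)) :=
                  fun hcc => hs fun _ => hcc
                rcases not_and_or.mp hp' with h | h
                · exact ⟨s, hsS, Or.inr (Or.inr (Or.inl (not_not.mp h)))⟩
                · exact ⟨s, hsS, Or.inr (Or.inr (Or.inr (not_not.mp h)))⟩
            choose! f hfS hfpat using hchoose
            have hmemT : ∀ d, d ∈ A \ ({a, b} : Finset V) → d ∈ A ∧ d ≠ a ∧ d ≠ b := by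
              intro d hd
              rw [Finset.mem_sdiff, Finset.mem_insert, Finset.mem_singleton] at hd
              exact ⟨hd.1, fun he => hd.2 (Or.inl he), fun he => hd.2 (Or.inr he)⟩
            have hinj : Set.InjOn f ↑(A \ ({a, b} : Finset V)) := by
              intro d hd d' hd' he
              have hd1 := hmemT d (Finset.mem_coe.mp hd)
              have hd2 := hmemT d' (Finset.mem_coe.mp hd')
              obtain ⟨hdA, hda, hdb⟩ := hd1
              obtain ⟨hd'A, hd'a, hd'b⟩ := hd2
              have p1 := hfpat d (Finset.mem_coe.mp hd)
              have p2 := hfpat d' (Finset.mem_coe.mp hd')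
              rw [he] at p1
              exact pat_eq hda hdb hd'a hd'b p1 p2
            have hne0 : ∀ d ∈ A \ ({a, b} : Finset V), f d ≠ s₀ := by
              intro d hd he
              obtain ⟨hdA, hda, hdb⟩ := hmemT d hd
              have p1 := hfpat d hd
              rw [he] at p1
              exact pat_ne hda hdb hab p1 hs₀pat
            have hmapsT : ∀ d ∈ A \ ({a, b} : Finset V),
                f d ∈ (Set.toFinite (S \ {s₀})).toFinset := by
              intro d hd
              rw [Set.Finite.mem_toFinset]
              exact ⟨hfS d hd, hne0 d hd⟩
            have hcardle := Finset.card_le_card_of_injOn f hmapsT hinj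
            have habs : ({a, b} : Finset V) ⊆ A := by
              intro x hx
              rw [Finset.mem_insert, Finset.mem_singleton] at hx
              rcases hx with rfl | rfl
              · exact haA
              · exact hbA
            have hTcard : (A \ ({a, b} : Finset V)).card = A.card - 2 := by
              rw [Finset.card_sdiff_of_subset habs, Finset.card_insert_of_notMem
                (by simpa using hab), Finset.card_singleton]
            have hs0card : (S \ {s₀}).ncard = S.ncard - 1 :=
              Set.ncard_diff_singleton_of_mem hs₀S
            have hSpos : 1 ≤ S.ncard := (Set.ncard_pos hSfin).mpr ⟨s₀, hs₀S⟩
            have hfin2 : (Set.toFinite (S \ {s₀})).toFinset.card = (S \ {s₀}).ncard :=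
              (Set.ncard_eq_toFinset_card _ _).symm
            omega
      -- reach-to-good
      have htogood : ∀ (σ : Equiv.Perm V) (hσmem : σ ∈ FixOut A \ S),
          ∃ b ∈ A, ((S ∩ Blk A l b).ncard ≤ A.card - 3) ∧
          ∃ σ₁, ∃ (h₁ : σ₁ ∈ FixOut A \ S), σ₁ ∈ Blk A l b ∧
            ((CayOn X A).induce (FixOut A \ S)).Reachable ⟨σ, hσmem⟩ ⟨σ₁, h₁⟩ := by
        intro σ hσmem
        have hσF := hσmem.1
        have hσS := hσmem.2
        have haA : σ l ∈ A := fixOut_maps hσF hlA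
        by_cases hg : (S ∩ Blk A l (σ l)).ncard ≤ A.card - 3
        · exact ⟨σ l, haA, hg, σ, hσmem, ⟨hσF, rfl⟩, Reachable.refl _⟩
        · obtain ⟨b, hbA, hgb, τ', hτ'B, hτ'S, hadj⟩ := hescape (σ l) hg σ ⟨hσF, rfl⟩ hσS
          have hτ'mem : τ' ∈ FixOut A \ S := ⟨hτ'B.1, hτ'S⟩
          refine ⟨b, hbA, hgb, τ', hτ'mem, hτ'B, Adj.reachable ?_⟩
          exact hadj
      -- final assembly
      rintro ⟨σ, hσmem⟩ ⟨τ, hτmem⟩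
      obtain ⟨a₁, ha₁A, hga₁, σ₁, hσ₁mem, hσ₁B, r₁⟩ := htogood σ hσmem
      obtain ⟨b₁, hb₁A, hgb₁, τ₁, hτ₁mem, hτ₁B, r₂⟩ := htogood τ hτmem
      have hσ₁S : σ₁ ∉ S := hσ₁mem.2
      have hτ₁S : τ₁ ∉ S := hτ₁mem.2
      have rmid : ((CayOn X A).induce (FixOut A \ S)).Reachable ⟨σ₁, hσ₁mem⟩ ⟨τ₁, hτ₁mem⟩ := by
        by_cases he : a₁ = b₁
        · subst he
          exact hwithin a₁ ha₁A hga₁ σ₁ hσ₁B hσ₁S τ₁ hτ₁B hτ₁S hσ₁mem hτ₁mem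
        · rcases hpath a₁ ha₁A b₁ hb₁A hga₁ hgb₁ he with hk | ⟨d, hdA, hgd, hda, hdb, hk1, hk2⟩
          · exact hcross a₁ ha₁A b₁ hb₁A hga₁ hgb₁ he hk σ₁ hσ₁B hσ₁S τ₁ hτ₁B hτ₁S hσ₁mem hτ₁mem
          · obtain ⟨σ', hσ'F, hσ'l, hσ'p, hσ'S, hτ'S⟩ :=
              cross_exists hlA hpA hpl ha₁A hdA (Ne.symm hda) hk1
            have hτ'B : σ' * Equiv.swap l p ∈ Blk A l d := by
              refine ⟨fixOut_mul_swap hσ'F hlA hpA, ?_⟩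
              show σ' (Equiv.swap l p l) = d
              rw [Equiv.swap_apply_left]; exact hσ'p
            have hτ'mem : σ' * Equiv.swap l p ∈ FixOut A \ S := ⟨hτ'B.1, hτ'S⟩
            have rA := hcross a₁ ha₁A d hdA hga₁ hgd (Ne.symm hda) hk1 σ₁ hσ₁B hσ₁S
              (σ' * Equiv.swap l p) hτ'B hτ'S hσ₁mem hτ'mem
            have rB := hcross d hdA b₁ hb₁A hgd hgb₁ hdb hk2 (σ' * Equiv.swap l p) hτ'B hτ'S
              τ₁ hτ₁B hτ₁S hτ'mem hτ₁mem
            exact rA.trans rB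
      exact r₁.trans (rmid.trans r₂.symm)
end FSaux


/-- Exchangeability criterion for `k`-connectivity: if for every permutation
`σ` and every edge `(u, v)` of `X` there are `k` internally disjoint paths
between `σ` and `σ ∘ (u v)` in `FS(X, Y)`, then `FS(X, Y)` is `k`-connected. -/
theorem stmt_9 (n k : ℕ) (hn : k + 1 ≤ n) (X Y : SimpleGraph (Fin n))
    (hX : X.Connected)
    (h : ∀ (σ : Equiv.Perm (Fin n)) (u v : Fin n), X.Adj u v →
      IntDisjPaths (FS X Y) k σ (σ * Equiv.swap u v)) :
    KConnected (FS X Y) k := by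
  classical
  intro S hSfin hcard
  -- the induced graph on the complement is nonempty
  have hnonempty : (Sᶜ : Set (Equiv.Perm (Fin n))).Nonempty := by
    rcases Set.eq_empty_or_nonempty (Sᶜ : Set (Equiv.Perm (Fin n))) with he | hne
    · exfalso
      have hu : S = Set.univ := by rwa [Set.compl_empty_iff] at he
      rw [hu, Set.ncard_univ] at hcard
      have h1 : Nat.card (Equiv.Perm (Fin n)) = n.factorial := by
        rw [Nat.card_eq_fintype_card, Fintype.card_perm, Fintype.card_fin]
      have h2 : n ≤ n.factorial := Nat.self_le_factorial n
      omega
    · exact hne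
  -- preconnectedness of the induced complete-Cayley graph minus S
  have hXpre : (X.induce ((Finset.univ : Finset (Fin n)) : Set (Fin n))).Preconnected := by
    intro u v
    obtain ⟨w⟩ := hX.preconnected u.1 v.1
    have key := reachable_induce_of_walk'
      (s := ((Finset.univ : Finset (Fin n)) : Set (Fin n))) w (by intro x _; simp)
    have e1 : (⟨u.1, by simp⟩ : ↥((Finset.univ : Finset (Fin n)) : Set (Fin n))) = u :=
      Subtype.ext rfl
    have e2 : (⟨v.1, by simp⟩ : ↥((Finset.univ : Finset (Fin n)) : Set (Fin n))) = v :=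
      Subtype.ext rfl
    rw [e1, e2] at key
    exact key
  have hS2 : S.ncard ≤ (Finset.univ : Finset (Fin n)).card - 2 := by
    have : (Finset.univ : Finset (Fin n)).card = n := by
      rw [Finset.card_univ, Fintype.card_fin]
    omega
  have hkey := cayOn_key X (Finset.univ : Finset (Fin n)).card (Finset.univ : Finset (Fin n))
    le_rfl hXpre S hS2
  have hk1 : 1 ≤ k := by omega
  -- converting a single Cayley edge into an FS-path avoiding S
  have edge_conv : ∀ (σ τ : Equiv.Perm (Fin n)) (hσ : σ ∈ (Sᶜ : Set (Equiv.Perm (Fin n))))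
      (hτ : τ ∈ (Sᶜ : Set (Equiv.Perm (Fin n)))),
      (CayOn X (Finset.univ : Finset (Fin n))).Adj σ τ →
      ((FS X Y).induce (Sᶜ : Set (Equiv.Perm (Fin n)))).Reachable ⟨σ, hσ⟩ ⟨τ, hτ⟩ := by
    have main : ∀ (σ' τ' : Equiv.Perm (Fin n)) (hσ' : σ' ∉ S) (hτ' : τ' ∉ S),
        (∃ i ∈ (Finset.univ : Finset (Fin n)), ∃ j ∈ (Finset.univ : Finset (Fin n)),
          X.Adj i j ∧ τ' = σ' * Equiv.swap i j) →
        ((FS X Y).induce (Sᶜ : Set (Equiv.Perm (Fin n)))).Reachable ⟨σ', hσ'⟩ ⟨τ', hτ'⟩ := by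
      rintro σ' τ' hσ' hτ' ⟨i, -, j, -, hXij, rfl⟩
      obtain ⟨P, hdisj⟩ := h σ' i j hXij
      have hex : ∃ m : Fin k, ∀ x ∈ (P m).1.support, x ∉ S := by
        by_contra hc
        push_neg at hc
        choose g hg1 hg2 using hc
        have hginj : Function.Injective g := by
          intro m₁ m₂ he
          by_contra hne'
          rcases hdisj m₁ m₂ hne' (g m₁) (hg1 m₁) (he ▸ hg1 m₂) with h1 | h1
          · exact hσ' (h1 ▸ hg2 m₁)
          · exact hτ' (h1 ▸ hg2 m₁)
        have hcard2 : k ≤ S.ncard := by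
          have h1 : (Finset.univ.image g).card = k := by
            rw [Finset.card_image_of_injective _ hginj, Finset.card_univ, Fintype.card_fin]
          have h2 : Finset.univ.image g ⊆ hSfin.toFinset := by
            intro x hx
            rw [Finset.mem_image] at hx
            obtain ⟨m, -, rfl⟩ := hx
            rw [Set.Finite.mem_toFinset]
            exact hg2 m
          have h3 := Finset.card_le_card h2
          rw [Set.ncard_eq_toFinset_card S hSfin]
          omega
        omega
      obtain ⟨m, hm⟩ := hex
      exact reachable_induce_of_walk' (s := (Sᶜ : Set (Equiv.Perm (Fin n)))) (P m).1 hm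
    intro σ τ hσ hτ hadj
    rw [CayOn, SimpleGraph.fromRel_adj] at hadj
    rcases hadj.2 with hr | hr
    · exact main σ τ hσ hτ hr
    · exact (main τ σ hτ hσ hr).symm
  -- assemble
  rw [SimpleGraph.connected_iff]
  constructor
  · intro x y
    have hx' : x.1 ∈ FixOut (Finset.univ : Finset (Fin n)) \ S :=
      ⟨fun z hz => absurd (Finset.mem_univ z) hz, x.2⟩
    have hy' : y.1 ∈ FixOut (Finset.univ : Finset (Fin n)) \ S :=
      ⟨fun z hz => absurd (Finset.mem_univ z) hz, y.2⟩
    obtain ⟨w⟩ := hkey ⟨x.1, hx'⟩ ⟨y.1, hy'⟩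
    have conv : ∀ (u v : ↥(FixOut (Finset.univ : Finset (Fin n)) \ S))
        (w : ((CayOn X (Finset.univ : Finset (Fin n))).induce
          (FixOut (Finset.univ : Finset (Fin n)) \ S)).Walk u v),
        ((FS X Y).induce (Sᶜ : Set (Equiv.Perm (Fin n)))).Reachable
          ⟨u.1, u.2.2⟩ ⟨v.1, v.2.2⟩ := by
      intro u v w
      induction w with
      | nil => exact Reachable.refl _
      | @cons u' b' v' hadj w ih =>
        exact Reachable.trans (edge_conv u'.1 b'.1 u'.2.2 b'.2.2 hadj) ih
    have key := conv _ _ w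
    have e1 : (⟨x.1, hx'.2⟩ : ↥(Sᶜ : Set (Equiv.Perm (Fin n)))) = x := Subtype.ext rfl
    have e2 : (⟨y.1, hy'.2⟩ : ↥(Sᶜ : Set (Equiv.Perm (Fin n)))) = y := Subtype.ext rfl
    rw [e1, e2] at key
    exact key
  · exact hnonempty.to_subtype
end

section
/- Let $X$ and $Y$ be bipartite graphs on $n \ge 3$ vertices with bipartitions $V(X) = A_X \sqcup B_X$ and $V(Y) = A_Y \sqcup B_Y$. For a permutation $\sigma$, define $p(\sigma) = |\sigma(A_X) \cap A_Y| + (\mathrm{sgn}(\sigma)+1)/2$. If $\sigma$ and $\tau$ lie in the same connected component of $\mathrm{FS}(X,Y)$, then $p(\sigma) \equiv p(\tau) \pmod 2$. -/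
open SimpleGraph

lemma const_of_adj {V : Type*} (G : SimpleGraph V) (f : V → ℕ)
    (hf : ∀ a b, G.Adj a b → f a = f b) {u v : V} (h : G.Reachable u v) :
    f u = f v := by
  obtain ⟨w⟩ := h
  induction w with
  | nil => rfl
  | cons h w ih => exact (hf _ _ h).trans ih

lemma swap_image {n : ℕ} (AX : Set (Fin n)) (i j : Fin n)
    (hi : i ∈ AX) (hj : j ∉ AX) :
    ⇑(Equiv.swap i j) '' AX = insert j (AX \ {i}) := by
  ext x
  simp only [Set.mem_image, Set.mem_insert_iff, Set.mem_diff, Set.mem_singleton_iff]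
  constructor
  · rintro ⟨a, ha, rfl⟩
    rcases eq_or_ne a i with rfl | hai
    · simp [Equiv.swap_apply_left]
    rcases eq_or_ne a j with rfl | haj
    · exact absurd ha hj
    · rw [Equiv.swap_apply_of_ne_of_ne hai haj]
      right
      exact ⟨ha, hai⟩
  · rintro (rfl | ⟨hx, hxi⟩)
    · exact ⟨i, hi, Equiv.swap_apply_left i x⟩
    · rcases eq_or_ne x j with rfl | hxj
      · exact absurd hx hj
      · exact ⟨x, hx, Equiv.swap_apply_of_ne_of_ne hxi hxj⟩

lemma key_step {n : ℕ} (AX AY : Set (Fin n)) (σ : Equiv.Perm (Fin n)) (i j : Fin n)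
    (hij : i ≠ j) (hi : i ∈ AX) (hj : j ∉ AX) (hB : σ i ∈ AY ↔ σ j ∉ AY) :
    ((⇑σ '' AX ∩ AY).ncard + (if Equiv.Perm.sign σ = 1 then 1 else 0)) % 2 =
    ((⇑(σ * Equiv.swap i j) '' AX ∩ AY).ncard +
      (if Equiv.Perm.sign (σ * Equiv.swap i j) = 1 then 1 else 0)) % 2 := by
  have himg : ⇑(σ * Equiv.swap i j) '' AX = insert (σ j) (⇑σ '' AX \ {σ i}) := by
    rw [Equiv.Perm.coe_mul, Set.image_comp, swap_image AX i j hi hj,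
      Set.image_insert_eq, Set.image_diff σ.injective, Set.image_singleton]
  have hsign : Equiv.Perm.sign (σ * Equiv.swap i j) = - Equiv.Perm.sign σ := by
    rw [Equiv.Perm.sign_mul, Equiv.Perm.sign_swap hij, mul_neg_one]
  have hsi : σ i ∈ ⇑σ '' AX := ⟨i, hi, rfl⟩
  have hsj : σ j ∉ ⇑σ '' AX := by
    rintro ⟨a, ha, hax⟩
    exact hj (by rwa [σ.injective hax] at ha)
  have hiftrade : (if Equiv.Perm.sign (σ * Equiv.swap i j) = 1 then (1:ℕ) else 0) =
      1 - (if Equiv.Perm.sign σ = 1 then 1 else 0) := by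
    rw [hsign]
    rcases Int.units_eq_one_or (Equiv.Perm.sign σ) with h | h <;> simp [h] <;> decide
  rw [himg, hiftrade]
  by_cases hAi : σ i ∈ AY
  · have hAj : σ j ∉ AY := hB.mp hAi
    have hset : insert (σ j) (⇑σ '' AX \ {σ i}) ∩ AY = (⇑σ '' AX ∩ AY) \ {σ i} := by
      ext x
      simp only [Set.mem_insert_iff, Set.mem_diff, Set.mem_inter_iff, Set.mem_singleton_iff]
      constructor
      · rintro ⟨rfl | ⟨hx, hxi⟩, hxA⟩
        · exact absurd hxA hAj
        · exact ⟨⟨hx, hxA⟩, hxi⟩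
      · rintro ⟨⟨hx, hxA⟩, hxi⟩
        exact ⟨Or.inr ⟨hx, hxi⟩, hxA⟩
    rw [hset]
    have hmem : σ i ∈ ⇑σ '' AX ∩ AY := ⟨hsi, hAi⟩
    have hcard : ((⇑σ '' AX ∩ AY) \ {σ i}).ncard = (⇑σ '' AX ∩ AY).ncard - 1 := by
      rw [Set.ncard_diff_singleton_of_mem hmem]
    have hpos : 1 ≤ (⇑σ '' AX ∩ AY).ncard := (Set.ncard_pos (Set.toFinite _)).mpr ⟨_, hmem⟩
    rw [hcard]
    rcases Int.units_eq_one_or (Equiv.Perm.sign σ) with h | h <;> simp [h] <;> omega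
  · have hAj : σ j ∈ AY := by by_contra hc; exact hAi (hB.mpr hc)
    have hset : insert (σ j) (⇑σ '' AX \ {σ i}) ∩ AY = insert (σ j) (⇑σ '' AX ∩ AY) := by
      ext x
      simp only [Set.mem_insert_iff, Set.mem_diff, Set.mem_inter_iff, Set.mem_singleton_iff]
      constructor
      · rintro ⟨rfl | ⟨hx, hxi⟩, hxA⟩
        · exact Or.inl rfl
        · exact Or.inr ⟨hx, hxA⟩
      · rintro (rfl | ⟨hx, hxA⟩)
        · exact ⟨Or.inl rfl, hAj⟩
        · rcases eq_or_ne x (σ i) with rfl | hxi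
          · exact absurd hxA hAi
          · exact ⟨Or.inr ⟨hx, hxi⟩, hxA⟩
    rw [hset]
    have hnm : σ j ∉ ⇑σ '' AX ∩ AY := fun hc => hsj hc.1
    rw [Set.ncard_insert_of_notMem hnm (Set.toFinite _)]
    rcases Int.units_eq_one_or (Equiv.Perm.sign σ) with h | h <;> simp [h] <;> omega


theorem stmt_13_aux (n : ℕ) (hn : 3 ≤ n) (X Y : SimpleGraph (Fin n))
    (AX AY : Set (Fin n))
    (hX : ∀ i j, X.Adj i j → (i ∈ AX ↔ j ∉ AX))
    (hY : ∀ i j, Y.Adj i j → (i ∈ AY ↔ j ∉ AY))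
    (σ τ : Equiv.Perm (Fin n))
    (h : (SimpleGraph.fromRel (fun σ τ => ∃ i j : Fin n,
      X.Adj i j ∧ Y.Adj (σ i) (σ j) ∧ τ = σ * Equiv.swap i j)).Reachable σ τ) :
    ((⇑σ '' AX ∩ AY).ncard + (if Equiv.Perm.sign σ = 1 then 1 else 0)) % 2 =
    ((⇑τ '' AX ∩ AY).ncard + (if Equiv.Perm.sign τ = 1 then 1 else 0)) % 2 := by
  refine const_of_adj _
    (fun ρ : Equiv.Perm (Fin n) => ((⇑ρ '' AX ∩ AY).ncard + (if Equiv.Perm.sign ρ = 1 then 1 else 0)) % 2)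
    ?_ h
  intro a b hab
  rw [SimpleGraph.fromRel_adj] at hab
  obtain ⟨hne, ⟨i, j, hXij, hYij, heq⟩ | ⟨i, j, hXij, hYij, heq⟩⟩ := hab
  · subst heq
    have hA := hX i j hXij
    have hB := hY _ _ hYij
    by_cases hi : i ∈ AX
    · exact key_step AX AY a i j hXij.ne hi (hA.mp hi) hB
    · have hjA : j ∈ AX := not_not.mp (fun hc => hi (hA.mpr hc))
      have hB' := hY _ _ hYij.symm
      rw [Equiv.swap_comm]
      exact key_step AX AY a j i hXij.ne.symm hjA hi hB'
  · subst heq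
    have hA := hX i j hXij
    have hB := hY _ _ hYij
    by_cases hi : i ∈ AX
    · exact (key_step AX AY b i j hXij.ne hi (hA.mp hi) hB).symm
    · have hjA : j ∈ AX := not_not.mp (fun hc => hi (hA.mpr hc))
      have hB' := hY _ _ hYij.symm
      rw [Equiv.swap_comm]
      exact (key_step AX AY b j i hXij.ne.symm hjA hi hB').symm

/-- The parity invariant of `FS(X, Y)` for bipartite `X` and `Y`:
`p(σ) = |σ(A_X) ∩ A_Y| + (sgn σ + 1)/2` is constant modulo 2 on connected
components of `FS(X, Y)`. -/
theorem stmt_13 (n : ℕ) (hn : 3 ≤ n) (X Y : SimpleGraph (Fin n))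
    (AX AY : Set (Fin n))
    (hX : ∀ i j, X.Adj i j → (i ∈ AX ↔ j ∉ AX))
    (hY : ∀ i j, Y.Adj i j → (i ∈ AY ↔ j ∉ AY))
    (σ τ : Equiv.Perm (Fin n)) (h : (FS X Y).Reachable σ τ) :
    ((⇑σ '' AX ∩ AY).ncard + (if Equiv.Perm.sign σ = 1 then 1 else 0)) % 2 =
    ((⇑τ '' AX ∩ AY).ncard + (if Equiv.Perm.sign τ = 1 then 1 else 0)) % 2 :=
  stmt_13_aux n hn X Y AX AY hX hY σ τ h
end

section
/- Let $X$ and $Y$ be bipartite graphs on $n \ge 3$ vertices. Then $\mathrm{FS}(X,Y)$ is disconnected. -/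
open SimpleGraph

open Classical in
noncomputable def pcount {n : ℕ} (AX AY : Set (Fin n)) (σ : Equiv.Perm (Fin n)) : ZMod 2 :=
  ∑ x : Fin n, if x ∈ AX ∧ σ x ∈ AY then (1 : ZMod 2) else 0

open Classical in
noncomputable def pinv {n : ℕ} (AX AY : Set (Fin n)) (σ : Equiv.Perm (Fin n)) : ZMod 2 :=
  pcount AX AY σ + (if Equiv.Perm.sign σ = 1 then 0 else 1)

lemma pcount_swap {n : ℕ} (AX AY : Set (Fin n)) (σ : Equiv.Perm (Fin n)) {i j : Fin n}
    (hij : i ≠ j) (hA : i ∈ AX ↔ j ∉ AX) (hB : σ i ∈ AY ↔ σ j ∉ AY) :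
    pcount AX AY (σ * Equiv.swap i j) = pcount AX AY σ + 1 := by
  classical
  have h1 : pcount AX AY (σ * Equiv.swap i j)
      = ∑ y : Fin n, if Equiv.swap i j y ∈ AX ∧ σ y ∈ AY then (1 : ZMod 2) else 0 := by
    unfold pcount
    refine Fintype.sum_equiv (Equiv.swap i j) _ _ (fun x => ?_)
    simp [Equiv.Perm.mul_apply, Equiv.swap_apply_self]
    exact if_congr Iff.rfl rfl rfl
  have h2 : (∑ y : Fin n, if Equiv.swap i j y ∈ AX ∧ σ y ∈ AY then (1 : ZMod 2) else 0)
      - pcount AX AY σ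
      = ∑ y : Fin n, ((if Equiv.swap i j y ∈ AX ∧ σ y ∈ AY then (1 : ZMod 2) else 0)
          - (if y ∈ AX ∧ σ y ∈ AY then (1 : ZMod 2) else 0)) := by
    unfold pcount; rw [Finset.sum_sub_distrib]
  have h3 : (∑ y : Fin n, ((if Equiv.swap i j y ∈ AX ∧ σ y ∈ AY then (1 : ZMod 2) else 0)
          - (if y ∈ AX ∧ σ y ∈ AY then (1 : ZMod 2) else 0))) = 1 := by
    rw [← Finset.sum_subset (Finset.subset_univ ({i, j} : Finset (Fin n)))
      (fun x _ hx => ?_)]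
    · rw [Finset.sum_pair hij]
      rw [Equiv.swap_apply_left, Equiv.swap_apply_right]
      by_cases hi : i ∈ AX <;> by_cases hsi : σ i ∈ AY
      · have hj : j ∉ AX := hA.mp hi
        have hsj : σ j ∉ AY := hB.mp hsi
        simp [hi, hj, hsi, hsj]
      · have hj : j ∉ AX := hA.mp hi
        have hsj : σ j ∈ AY := by by_contra h; exact hsi (hB.mpr h)
        simp [hi, hj, hsi, hsj]
      · have hj : j ∈ AX := by by_contra h; exact hi (hA.mpr h)
        have hsj : σ j ∉ AY := hB.mp hsi
        simp [hi, hj, hsi, hsj]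
      · have hj : j ∈ AX := by by_contra h; exact hi (hA.mpr h)
        have hsj : σ j ∈ AY := by by_contra h; exact hsi (hB.mpr h)
        simp [hi, hj, hsi, hsj]
    · have hxi : x ≠ i := by simp at hx; tauto
      have hxj : x ≠ j := by simp at hx; tauto
      rw [Equiv.swap_apply_of_ne_of_ne hxi hxj, sub_self]
  have := h2.trans h3
  rw [h1]
  linear_combination this

lemma pinv_adj {n : ℕ} (X Y : SimpleGraph (Fin n)) (AX AY : Set (Fin n))
    (hX : ∀ i j, X.Adj i j → (i ∈ AX ↔ j ∉ AX))
    (hY : ∀ i j, Y.Adj i j → (i ∈ AY ↔ j ∉ AY))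
    (σ τ : Equiv.Perm (Fin n))
    (h : ∃ i j : Fin n, X.Adj i j ∧ Y.Adj (σ i) (σ j) ∧ τ = σ * Equiv.swap i j) :
    pinv AX AY τ = pinv AX AY σ := by
  classical
  obtain ⟨i, j, hXij, hYij, rfl⟩ := h
  have hij : i ≠ j := hXij.ne
  unfold pinv
  rw [pcount_swap AX AY σ hij (hX i j hXij) (hY _ _ hYij)]
  have hsign : Equiv.Perm.sign (σ * Equiv.swap i j) = - Equiv.Perm.sign σ := by
    rw [Equiv.Perm.sign_mul, Equiv.Perm.sign_swap hij, mul_neg_one]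
  have h11 : (1 : ZMod 2) + 1 = 0 := by decide
  rcases Int.units_eq_one_or (Equiv.Perm.sign σ) with hs | hs <;>
      rw [hs] at hsign ⊢ <;> rw [hsign] <;> norm_num <;>
    rw [add_assoc, h11, add_zero]

lemma pcount_swap_same {n : ℕ} (AX AY : Set (Fin n)) {a b : Fin n}
    (hab : a ≠ b) (hA : a ∈ AX ↔ b ∈ AX) :
    pcount AX AY (Equiv.swap a b) = pcount AX AY 1 := by
  classical
  have h2 : pcount AX AY (Equiv.swap a b) - pcount AX AY 1
      = ∑ y : Fin n, ((if y ∈ AX ∧ Equiv.swap a b y ∈ AY then (1 : ZMod 2) else 0)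
          - (if y ∈ AX ∧ y ∈ AY then (1 : ZMod 2) else 0)) := by
    unfold pcount; rw [Finset.sum_sub_distrib]; simp only [Equiv.Perm.one_apply]
    exact congrArg₂ (· - ·) (Finset.sum_congr rfl fun _ _ => if_congr Iff.rfl rfl rfl)
      (Finset.sum_congr rfl fun _ _ => if_congr Iff.rfl rfl rfl)
  have h3 : (∑ y : Fin n, ((if y ∈ AX ∧ Equiv.swap a b y ∈ AY then (1 : ZMod 2) else 0)
          - (if y ∈ AX ∧ y ∈ AY then (1 : ZMod 2) else 0))) = 0 := by
    rw [← Finset.sum_subset (Finset.subset_univ ({a, b} : Finset (Fin n)))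
      (fun x _ hx => ?_)]
    · rw [Finset.sum_pair hab, Equiv.swap_apply_left, Equiv.swap_apply_right]
      by_cases ha : a ∈ AX
      · have hb : b ∈ AX := hA.mp ha
        by_cases hsa : a ∈ AY <;> by_cases hsb : b ∈ AY <;>
          simp [ha, hb, hsa, hsb] <;> decide
      · have hb : b ∉ AX := fun h => ha (hA.mpr h)
        simp [ha, hb]
    · have hxa : x ≠ a := by simp at hx; tauto
      have hxb : x ≠ b := by simp at hx; tauto
      rw [Equiv.swap_apply_of_ne_of_ne hxa hxb, sub_self]
  have := h2.trans h3
  linear_combination this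

lemma pinv_swap_ne {n : ℕ} (AX AY : Set (Fin n)) {a b : Fin n}
    (hab : a ≠ b) (hA : a ∈ AX ↔ b ∈ AX) :
    pinv AX AY (Equiv.swap a b) ≠ pinv AX AY 1 := by
  classical
  unfold pinv
  rw [pcount_swap_same AX AY hab hA, Equiv.Perm.sign_swap hab, Equiv.Perm.sign_one]
  norm_num

lemma pinv_reachable {n : ℕ} (X Y : SimpleGraph (Fin n)) (AX AY : Set (Fin n))
    (hX : ∀ i j, X.Adj i j → (i ∈ AX ↔ j ∉ AX))
    (hY : ∀ i j, Y.Adj i j → (i ∈ AY ↔ j ∉ AY))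
    (σ τ : Equiv.Perm (Fin n)) (h : (FS X Y).Reachable σ τ) :
    pinv AX AY σ = pinv AX AY τ := by
  obtain ⟨w⟩ := h
  induction w with
  | nil => rfl
  | cons ha _ ih =>
    refine Eq.trans ?_ ih
    rcases ha.2 with h | h
    · exact (pinv_adj X Y AX AY hX hY _ _ h).symm
    · exact pinv_adj X Y AX AY hX hY _ _ h

theorem stmt_14X (n : ℕ) (hn : 3 ≤ n) (X Y : SimpleGraph (Fin n))
    (AX AY : Set (Fin n))
    (hX : ∀ i j, X.Adj i j → (i ∈ AX ↔ j ∉ AX))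
    (hY : ∀ i j, Y.Adj i j → (i ∈ AY ↔ j ∉ AY)) :
    ¬ (FS X Y).Connected := by
  classical
  set v0 : Fin n := ⟨0, by omega⟩
  set v1 : Fin n := ⟨1, by omega⟩
  set v2 : Fin n := ⟨2, by omega⟩
  have h01 : v0 ≠ v1 := by simp [v0, v1, Fin.ext_iff]
  have h02 : v0 ≠ v2 := by simp [v0, v2, Fin.ext_iff]
  have h12 : v1 ≠ v2 := by simp [v1, v2, Fin.ext_iff]
  have hex : ∃ a b : Fin n, a ≠ b ∧ (a ∈ AX ↔ b ∈ AX) := by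
    by_cases h0 : v0 ∈ AX <;> by_cases h1 : v1 ∈ AX <;> by_cases h2 : v2 ∈ AX <;>
      first
        | exact ⟨v0, v1, h01, iff_of_true h0 h1⟩
        | exact ⟨v0, v1, h01, iff_of_false h0 h1⟩
        | exact ⟨v0, v2, h02, iff_of_true h0 h2⟩
        | exact ⟨v0, v2, h02, iff_of_false h0 h2⟩
        | exact ⟨v1, v2, h12, iff_of_true h1 h2⟩
        | exact ⟨v1, v2, h12, iff_of_false h1 h2⟩
  obtain ⟨a, b, hab, hA⟩ := hex
  intro hcon
  exact pinv_swap_ne AX AY hab hA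
    (pinv_reachable X Y AX AY hX hY _ _ (hcon.preconnected (Equiv.swap a b) 1))

/-- If `X` and `Y` are bipartite graphs on `n ≥ 3` vertices, then `FS(X, Y)`
is disconnected. -/
theorem stmt_14 (n : ℕ) (hn : 3 ≤ n) (X Y : SimpleGraph (Fin n))
    (AX AY : Set (Fin n))
    (hX : ∀ i j, X.Adj i j → (i ∈ AX ↔ j ∉ AX))
    (hY : ∀ i j, Y.Adj i j → (i ∈ AY ↔ j ∉ AY)) :
    ¬ (FS X Y).Connected := by
  exact stmt_14X n hn X Y AX AY hX hY
end
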